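/- arXiv:1110.5780 — 5 statements merged into one kernel-verified Lean document; each statement's English description precedes it below -/
import Mathlib

section
/- For every finite complex Borel measure μ on S^d, every r ∈ (0,1), and every y ∈ S^d, there exists δ ≥ 1 - r such that |P[μ](ry)| ≤ C · |μ|(κ(y,δ))/σ(κ(y,δ)), where C is a constant depending only on the dimension d and κ(y,δ) = {ξ ∈ S^d : ‖ξ - y‖ < δ}. -/
open Metric Set MeasureTheory
open scoped Pointwise ENNReal

/-- The Poisson kernel on the unit ball of `ℝ^{d+1}`. -/
noncomputable def spherePoissonKernel (d : ℕ) (x ξ : EuclideanSpace ℝ (Fin (d + 1))) : ℝ :=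
  (1 - ‖x‖ ^ 2) / ‖x - ξ‖ ^ (d + 1)

/-- The normalized surface measure on the unit sphere of `ℝ^{d+1}`. -/
noncomputable def sphereMeasure (d : ℕ) :
    Measure (sphere (0 : EuclideanSpace ℝ (Fin (d + 1))) 1) :=
  ((volume : Measure (EuclideanSpace ℝ (Fin (d + 1)))).toSphere Set.univ)⁻¹ •
    (volume : Measure (EuclideanSpace ℝ (Fin (d + 1)))).toSphere

/-- The open spherical cap of center `y` and Euclidean radius `δ`. -/
def cap (d : ℕ) (y : sphere (0 : EuclideanSpace ℝ (Fin (d + 1))) 1) (δ : ℝ) :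
    Set (sphere (0 : EuclideanSpace ℝ (Fin (d + 1))) 1) :=
  {ξ | ‖(ξ : EuclideanSpace ℝ (Fin (d + 1))) - (y : EuclideanSpace ℝ (Fin (d + 1)))‖ < δ}

lemma abs_coord_le_norm {n : ℕ} (x : EuclideanSpace ℝ (Fin n)) (i : Fin n) : |x i| ≤ ‖x‖ := by
  rw [EuclideanSpace.norm_eq]
  rw [← Real.sqrt_sq_eq_abs]
  apply Real.sqrt_le_sqrt
  have := Finset.single_le_sum (f := fun j => ‖x j‖^2) (fun j _ => sq_nonneg _)
    (Finset.mem_univ i)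
  simpa [Real.norm_eq_abs, sq_abs] using this

lemma cap_measurableSet (d : ℕ) (y : sphere (0 : EuclideanSpace ℝ (Fin (d + 1))) 1) (δ : ℝ) :
    MeasurableSet (cap d y δ) := by
  have : IsOpen (cap d y δ) := by
    have : Continuous fun ξ : sphere (0 : EuclideanSpace ℝ (Fin (d + 1))) 1 =>
        ‖(ξ : EuclideanSpace ℝ (Fin (d + 1))) - (y : EuclideanSpace ℝ (Fin (d + 1)))‖ :=
      (continuous_subtype_val.sub continuous_const).norm
    exact isOpen_Iio.preimage this
  exact this.measurableSet

lemma norm_coe_sphere (d : ℕ) (y : sphere (0 : EuclideanSpace ℝ (Fin (d + 1))) 1) :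
    ‖(y : EuclideanSpace ℝ (Fin (d + 1)))‖ = 1 := by
  have := y.2
  simpa [mem_sphere_iff_norm] using this

lemma cone_volume_pos (d : ℕ) (y : sphere (0 : EuclideanSpace ℝ (Fin (d + 1))) 1) {δ : ℝ}
    (hδ : 0 < δ) : 0 < volume (Ioo (0:ℝ) 1 • (Subtype.val '' cap d y δ)) := by
  set E := EuclideanSpace ℝ (Fin (d + 1))
  set U : Set E := {x | 0 < ‖x‖} ∩
    ((fun x : E => (‖x‖, ‖x‖⁻¹ • x)) ⁻¹' ((Ioo (0:ℝ) 1) ×ˢ (ball (y : E) δ))) with hU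
  have hUopen : IsOpen U := by
    apply ContinuousOn.isOpen_inter_preimage
    · apply ContinuousOn.prodMk continuous_norm.continuousOn
      exact ContinuousOn.smul ((continuousOn_id.norm).inv₀ (fun x hx => ne_of_gt hx))
        continuousOn_id
    · exact isOpen_lt continuous_const continuous_norm
    · exact (isOpen_Ioo).prod isOpen_ball
  have hUne : U.Nonempty := by
    refine ⟨(2⁻¹ : ℝ) • (y : E), ?_, ?_⟩
    · have : ‖(2⁻¹ : ℝ) • (y : EuclideanSpace ℝ (Fin (d+1)))‖ = 2⁻¹ := by
        simp [norm_smul, norm_coe_sphere]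
      simp only [Set.mem_setOf_eq, this]; norm_num
    · constructor
      · simp [norm_smul, norm_coe_sphere]; norm_num
      · have h1 : ‖(2⁻¹:ℝ) • (y : E)‖ = 2⁻¹ := by simp [norm_smul, norm_coe_sphere]
        simp only [Set.mem_preimage, h1]
        have : ((2:ℝ)⁻¹)⁻¹ • ((2⁻¹ : ℝ) • (y : E)) = (y : E) := by
          rw [smul_smul]; norm_num
        simp [this, mem_ball, hδ]
  have hsub : U ⊆ Ioo (0:ℝ) 1 • (Subtype.val '' cap d y δ) := by
    rintro x ⟨hx0, hx1⟩
    simp only [Set.mem_preimage, Set.mem_prod] at hx1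
    obtain ⟨hnorm, hball⟩ := hx1
    have hxne : ‖x‖ ≠ 0 := ne_of_gt hx0
    have hξ : ‖‖x‖⁻¹ • x‖ = 1 := by
      rw [norm_smul, Real.norm_eq_abs, abs_of_pos (inv_pos.2 hx0), inv_mul_cancel₀ hxne]
    refine Set.mem_smul.2 ⟨‖x‖, hnorm, ‖x‖⁻¹ • x, ?_, ?_⟩
    · refine ⟨⟨‖x‖⁻¹ • x, ?_⟩, ?_, rfl⟩
      · simpa [mem_sphere_iff_norm] using hξ
      · simpa [cap, mem_ball, dist_eq_norm] using hball
    · rw [smul_smul]; simp [mul_inv_cancel₀ hxne]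
  calc (0 : ℝ≥0∞) < volume U := hUopen.measure_pos volume hUne
  _ ≤ _ := measure_mono hsub

lemma cone_volume_le (d : ℕ) (y : sphere (0 : EuclideanSpace ℝ (Fin (d + 1))) 1) {δ : ℝ}
    (hδ : 0 < δ) :
    volume (Ioo (0:ℝ) 1 • (Subtype.val '' cap d y δ)) ≤
      ENNReal.ofReal ((1 + 2*δ) * (2*δ)^d) := by
  set E := EuclideanSpace ℝ (Fin (d + 1))
  set e₀ : E := EuclideanSpace.single (0 : Fin (d+1)) (1:ℝ) with he₀
  have he₀norm : ‖e₀‖ = 1 := by rw [he₀, EuclideanSpace.norm_single]; norm_num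
  have hnorm_eq : ‖e₀‖ = ‖(y : E)‖ := by rw [he₀norm, norm_coe_sphere]
  set f : E ≃ₗᵢ[ℝ] E := Submodule.reflection (ℝ ∙ (e₀ - (y : E)))ᗮ with hf
  have hfe₀ : f e₀ = (y : E) := Submodule.reflection_sub hnorm_eq
  set t : Fin (d+1) → Set ℝ := fun i => if i = 0 then Ioo (-δ) (1+δ) else Ioo (-δ) δ with ht
  have hti : ∀ i, MeasurableSet (t i) := by
    intro i
    by_cases h : i = 0 <;> simp only [ht, h, if_true, if_false, reduceIte] <;>
      exact measurableSet_Ioo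
  set B : Set E := (MeasurableEquiv.toLp 2 (Fin (d+1) → ℝ)).symm ⁻¹' (Set.pi Set.univ t) with hB
  have hBmeas : MeasurableSet B :=
    (MeasurableEquiv.measurable _) (MeasurableSet.univ_pi hti)
  have hmemB : ∀ x : E, x ∈ B ↔ ∀ i, x i ∈ t i := by
    intro x
    simp [hB, Set.mem_pi]
  have hvolB : volume B = ENNReal.ofReal ((1 + 2*δ) * (2*δ)^d) := by
    rw [hB, (EuclideanSpace.volume_preserving_symm_measurableEquiv_toLp (Fin (d+1))).measure_preimage
      (MeasurableSet.univ_pi hti).nullMeasurableSet]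
    rw [volume_pi_pi]
    rw [Fin.prod_univ_succ]
    have h0 : t 0 = Ioo (-δ) (1+δ) := by simp [ht]
    have hs : ∀ j : Fin d, t j.succ = Ioo (-δ) δ := fun j => by
      simp [ht, Fin.succ_ne_zero]
    simp only [h0, hs, Real.volume_Ioo, Finset.prod_const, Finset.card_univ, Fintype.card_fin]
    rw [ENNReal.ofReal_mul (by positivity), ENNReal.ofReal_pow (by positivity)]
    have h1 : (1:ℝ) + δ - -δ = 1 + 2*δ := by ring
    have h2 : δ - -δ = 2*δ := by ring
    rw [h1, h2]
  have hsub : Ioo (0:ℝ) 1 • (Subtype.val '' cap d y δ) ⊆ f '' B := by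
    rintro x hx
    obtain ⟨s, hs, b, hb, rfl⟩ := Set.mem_smul.1 hx
    obtain ⟨ξ, hξcap, rfl⟩ := hb
    set u : E := f.symm (ξ : E) with hu
    have hudist : ‖u - e₀‖ < δ := by
      have heq : f (u - e₀) = (ξ : E) - (y : E) := by
        rw [map_sub, hfe₀, hu, LinearIsometryEquiv.apply_symm_apply]
      have hnorm : ‖u - e₀‖ = ‖(ξ : E) - (y : E)‖ := by
        rw [← heq, f.norm_map]
      rw [hnorm]; exact hξcap
    refine ⟨s • u, ?_, ?_⟩
    · rw [hmemB]
      intro i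
      have hcoord : |(s • u - s • e₀) i| ≤ ‖s • u - s • e₀‖ := abs_coord_le_norm _ i
      have hns : ‖s • u - s • e₀‖ < δ := by
        rw [← smul_sub, norm_smul, Real.norm_eq_abs, abs_of_pos hs.1]
        calc s * ‖u - e₀‖ ≤ 1 * ‖u - e₀‖ := by
              apply mul_le_mul_of_nonneg_right hs.2.le (norm_nonneg _)
        _ < δ := by rw [one_mul]; exact hudist
      have happ : (s • u - s • e₀) i = (s • u) i - s * e₀ i := rfl
      rw [happ] at hcoord
      have hcoord' : |(s • u) i - s * e₀ i| < δ := lt_of_le_of_lt hcoord hns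
      by_cases hi : i = 0
      · subst hi
        have he00 : e₀ 0 = 1 := by simp [he₀, EuclideanSpace.single_apply]
        rw [he00, mul_one, abs_lt] at hcoord'
        simp only [ht, if_pos rfl, Set.mem_Ioo]
        constructor
        · linarith [hcoord'.1, hs.1]
        · linarith [hcoord'.2, hs.2]
      · have he0i : e₀ i = 0 := by simp [he₀, EuclideanSpace.single_apply, hi]
        rw [he0i, mul_zero, sub_zero, abs_lt] at hcoord'
        simp only [ht, if_neg hi, Set.mem_Ioo]
        exact hcoord'
    · rw [f.map_smul, hu, LinearIsometryEquiv.apply_symm_apply]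
  calc volume (Ioo (0:ℝ) 1 • (Subtype.val '' cap d y δ)) ≤ volume (f '' B) :=
        measure_mono hsub
  _ = volume B := by
        have himg : ⇑f '' B = ⇑f.symm ⁻¹' B :=
          congrFun (Set.image_eq_preimage_of_inverse (fun x => f.symm_apply_apply x)
            (fun x => f.apply_symm_apply x)) B
        rw [himg]
        exact (f.symm.measurePreserving).measure_preimage hBmeas.nullMeasurableSet
  _ ≤ ENNReal.ofReal ((1 + 2*δ) * (2*δ)^d) := le_of_eq hvolB

lemma toSphere_cap_eq (d : ℕ) (y : sphere (0 : EuclideanSpace ℝ (Fin (d + 1))) 1) (δ : ℝ) :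
    (volume : Measure (EuclideanSpace ℝ (Fin (d + 1)))).toSphere (cap d y δ) =
      ((d : ℝ≥0∞) + 1) * volume (Ioo (0:ℝ) 1 • (Subtype.val '' cap d y δ)) := by
  rw [Measure.toSphere_apply' _ (cap_measurableSet d y δ), finrank_euclideanSpace_fin]
  push_cast
  ring

lemma toSphere_univ_pos (d : ℕ) :
    0 < (volume : Measure (EuclideanSpace ℝ (Fin (d + 1)))).toSphere Set.univ := by
  rw [Measure.toSphere_apply_univ, finrank_euclideanSpace_fin]
  apply ENNReal.mul_pos
  · simp
  · exact (measure_ball_pos volume (0 : EuclideanSpace ℝ (Fin (d+1))) one_pos).ne'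

lemma toSphere_univ_lt_top (d : ℕ) :
    (volume : Measure (EuclideanSpace ℝ (Fin (d + 1)))).toSphere Set.univ < ⊤ :=
  measure_lt_top _ _

lemma sphereMeasure_apply (d : ℕ) (s : Set (sphere (0 : EuclideanSpace ℝ (Fin (d + 1))) 1)) :
    sphereMeasure d s =
      ((volume : Measure (EuclideanSpace ℝ (Fin (d + 1)))).toSphere Set.univ)⁻¹ *
        (volume : Measure (EuclideanSpace ℝ (Fin (d + 1)))).toSphere s := by
  rw [sphereMeasure, Measure.smul_apply, smul_eq_mul]

lemma sphereMeasure_cap_pos (d : ℕ) (y : sphere (0 : EuclideanSpace ℝ (Fin (d + 1))) 1)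
    {δ : ℝ} (hδ : 0 < δ) : 0 < ((sphereMeasure d) (cap d y δ)).toReal := by
  have h1 : 0 < (volume : Measure (EuclideanSpace ℝ (Fin (d + 1)))).toSphere (cap d y δ) := by
    rw [toSphere_cap_eq]
    exact ENNReal.mul_pos (by simp) (cone_volume_pos d y hδ).ne'
  have h2 : (volume : Measure (EuclideanSpace ℝ (Fin (d + 1)))).toSphere (cap d y δ) < ⊤ :=
    measure_lt_top _ _
  rw [sphereMeasure_apply]
  apply ENNReal.toReal_pos
  · exact (ENNReal.mul_pos (ENNReal.inv_ne_zero.2 (toSphere_univ_lt_top d).ne) h1.ne').ne'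
  · exact (ENNReal.mul_lt_top (ENNReal.inv_lt_top.2 (toSphere_univ_pos d)) h2).ne

lemma sphereMeasure_cap_le (d : ℕ) (y : sphere (0 : EuclideanSpace ℝ (Fin (d + 1))) 1)
    {δ : ℝ} (hδ : 0 < δ) :
    ((sphereMeasure d) (cap d y δ)).toReal ≤
      (((volume : Measure (EuclideanSpace ℝ (Fin (d + 1)))).toSphere Set.univ).toReal)⁻¹ *
        ((d + 1) * ((1 + 2*δ) * (2*δ)^d)) := by
  set T := (volume : Measure (EuclideanSpace ℝ (Fin (d + 1)))).toSphere Set.univ with hT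
  have hT0 : T ≠ 0 := (toSphere_univ_pos d).ne'
  have hTtop : T ≠ ⊤ := (toSphere_univ_lt_top d).ne
  rw [sphereMeasure_apply, ENNReal.toReal_mul, ENNReal.toReal_inv]
  apply mul_le_mul_of_nonneg_left _ (by positivity)
  have hle : (volume : Measure (EuclideanSpace ℝ (Fin (d + 1)))).toSphere (cap d y δ) ≤
      ENNReal.ofReal ((d + 1) * ((1 + 2*δ) * (2*δ)^d)) := by
    rw [toSphere_cap_eq]
    calc ((d : ℝ≥0∞) + 1) * volume (Ioo (0:ℝ) 1 • (Subtype.val '' cap d y δ))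
        ≤ ((d : ℝ≥0∞) + 1) * ENNReal.ofReal ((1 + 2*δ) * (2*δ)^d) :=
          mul_le_mul_right (cone_volume_le d y hδ) _
      _ = ENNReal.ofReal ((d + 1) * ((1 + 2*δ) * (2*δ)^d)) := by
          have hcast : ((d : ℝ≥0∞) + 1) = ENNReal.ofReal ((d : ℝ) + 1) := by
            rw [ENNReal.ofReal_add (by positivity) zero_le_one, ENNReal.ofReal_natCast,
              ENNReal.ofReal_one]
          rw [hcast, ← ENNReal.ofReal_mul (by positivity)]
  exact ENNReal.toReal_le_of_le_ofReal (by positivity) hle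

/-- A finite complex Borel measure `μ` on the sphere is encoded through its polar
decomposition `dμ = g d|μ|`, where `ν = |μ|` is a finite positive measure
and `g` is a measurable function of modulus `1`.  Then `P[μ](ry)` is bounded by
`C |μ|(κ(y,δ))/σ(κ(y,δ))` for some cap of radius `δ ≥ 1 - r`. -/
theorem poissonIntegral_le_average_cap (d : ℕ) :
    ∃ C : ℝ, 0 < C ∧
      ∀ (ν : Measure (sphere (0 : EuclideanSpace ℝ (Fin (d + 1))) 1)),
        IsFiniteMeasure ν →
      ∀ g : sphere (0 : EuclideanSpace ℝ (Fin (d + 1))) 1 → ℂ,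
        Measurable g → (∀ ξ, ‖g ξ‖ = 1) →
      ∀ r ∈ Ioo (0 : ℝ) 1, ∀ y : sphere (0 : EuclideanSpace ℝ (Fin (d + 1))) 1,
        ∃ δ : ℝ, 1 - r ≤ δ ∧
          ‖∫ ξ, (spherePoissonKernel d (r • (y : EuclideanSpace ℝ (Fin (d + 1)))) ξ : ℂ) * g ξ ∂ν‖
            ≤ C * (ν (cap d y δ)).toReal / ((sphereMeasure d) (cap d y δ)).toReal := by
  classical
  set T := (volume : Measure (EuclideanSpace ℝ (Fin (d + 1)))).toSphere Set.univ with hT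
  have hT0 : (0:ℝ) < T.toReal :=
    ENNReal.toReal_pos (toSphere_univ_pos d).ne' (toSphere_univ_lt_top d).ne
  set A : ℝ := (T.toReal)⁻¹ * ((d + 1) * (9 * 2^d)) with hA
  have hApos : 0 < A := by positivity
  set K : ℝ := 2 * 4^(d+1) with hK
  have hKpos : 0 < K := by positivity
  refine ⟨2 * (K * A), by positivity, ?_⟩
  intro ν hν g hgm hg1 r hr y
  obtain ⟨hr0, hr1⟩ := hr
  set ε := 1 - r with hεdef
  have hε0 : 0 < ε := by rw [hεdef]; linarith
  have hε1 : ε ≤ 1 := by rw [hεdef]; linarith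
  obtain ⟨N, hN, hNmin⟩ : ∃ N : ℕ, 2 < 2^N * ε ∧ ∀ m : ℕ, m < N → ¬(2 < 2^m * ε) := by
    have hex : ∃ n : ℕ, 2 < 2^n * ε := by
      obtain ⟨n, hn⟩ := pow_unbounded_of_one_lt (2/ε) (by norm_num : (1:ℝ) < 2)
      refine ⟨n, ?_⟩
      rw [div_lt_iff₀ hε0] at hn
      linarith
    exact ⟨Nat.find hex, Nat.find_spec hex, fun m hm => Nat.find_min hex hm⟩
  set δ : ℕ → ℝ := fun k => 2^k * ε with hδdef
  have hδpos : ∀ k, 0 < δ k := fun k => by positivity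
  have hNδ : 2 < δ N := hN
  have hδmono : ∀ j k : ℕ, j ≤ k → δ j ≤ δ k := by
    intro j k h
    apply mul_le_mul_of_nonneg_right _ hε0.le
    exact pow_le_pow_right₀ (by norm_num) h
  have hδ4 : ∀ k, k ≤ N → δ k ≤ 4 := by
    intro k hk
    rcases Nat.eq_zero_or_pos N with h0 | hpos
    · have : k = 0 := by omega
      subst this
      have : δ 0 = ε := by simp [hδdef]
      rw [this]; linarith
    · have hN1 : δ (N-1) ≤ 2 := le_of_not_gt (hNmin (N-1) (by omega))
      have hhalf : δ N = 2 * δ (N-1) := by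
        simp only [hδdef]
        rw [← mul_assoc]
        congr 1
        rw [← pow_succ']
        congr 1
        omega
      calc δ k ≤ δ N := hδmono k N hk
      _ = 2 * δ (N-1) := hhalf
      _ ≤ 4 := by linarith
  set x : EuclideanSpace ℝ (Fin (d+1)) := r • (y : EuclideanSpace ℝ (Fin (d+1))) with hxdef
  have hxnorm : ‖x‖ = r := by
    rw [hxdef, norm_smul, Real.norm_eq_abs, abs_of_pos hr0, norm_coe_sphere, mul_one]
  have hxy : ‖(y : EuclideanSpace ℝ (Fin (d+1))) - x‖ = ε := by
    rw [hxdef]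
    have h1 : (y : EuclideanSpace ℝ (Fin (d+1))) - r • (y : EuclideanSpace ℝ (Fin (d+1)))
        = (1 - r) • (y : EuclideanSpace ℝ (Fin (d+1))) := by
      rw [sub_smul, one_smul]
    rw [h1, norm_smul, Real.norm_eq_abs, abs_of_pos (by linarith : (0:ℝ) < 1 - r),
      norm_coe_sphere, mul_one, hεdef]
  have hdistlow : ∀ ξ : sphere (0 : EuclideanSpace ℝ (Fin (d+1))) 1,
      ε ≤ ‖x - (ξ : EuclideanSpace ℝ (Fin (d+1)))‖ := by
    intro ξ
    have h1 : ‖(ξ : EuclideanSpace ℝ (Fin (d+1)))‖ - ‖x‖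
        ≤ ‖(ξ : EuclideanSpace ℝ (Fin (d+1))) - x‖ := norm_sub_norm_le _ _
    rw [norm_coe_sphere, hxnorm] at h1
    rw [norm_sub_rev]
    rw [hεdef]
    linarith
  have hPnonneg : ∀ ξ : sphere (0 : EuclideanSpace ℝ (Fin (d+1))) 1,
      0 ≤ spherePoissonKernel d x (ξ : EuclideanSpace ℝ (Fin (d+1))) := by
    intro ξ
    rw [spherePoissonKernel, hxnorm]
    apply div_nonneg (by nlinarith) (by positivity)
  set c : ℕ → ℝ := fun k => K * ε / (δ k)^(d+1) with hcdef
  have hcpos : ∀ k, 0 < c k := by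
    intro k
    have := hδpos k
    positivity
  set F : sphere (0 : EuclideanSpace ℝ (Fin (d+1))) 1 → ℝ :=
    fun ξ => ∑ k ∈ Finset.range (N+1), (cap d y (δ k)).indicator (fun _ => c k) ξ with hFdef
  have hPF : ∀ ξ : sphere (0 : EuclideanSpace ℝ (Fin (d+1))) 1,
      spherePoissonKernel d x (ξ : EuclideanSpace ℝ (Fin (d+1))) ≤ F ξ := by
    intro ξ
    have htle : ‖(ξ : EuclideanSpace ℝ (Fin (d+1))) - (y : EuclideanSpace ℝ (Fin (d+1)))‖ ≤ 2 := by
      calc ‖(ξ : EuclideanSpace ℝ (Fin (d+1))) - (y : EuclideanSpace ℝ (Fin (d+1)))‖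
          ≤ ‖(ξ : EuclideanSpace ℝ (Fin (d+1)))‖ + ‖(y : EuclideanSpace ℝ (Fin (d+1)))‖ :=
            norm_sub_le _ _
      _ = 2 := by rw [norm_coe_sphere, norm_coe_sphere]; norm_num
    have hexk : ∃ k, ‖(ξ : EuclideanSpace ℝ (Fin (d+1))) - (y : EuclideanSpace ℝ (Fin (d+1)))‖
        < δ k := ⟨N, lt_of_le_of_lt htle hNδ⟩
    set k₀ := Nat.find hexk with hk₀def
    have hk₀N : k₀ ≤ N := Nat.find_min' hexk (lt_of_le_of_lt htle hNδ)
    have htk₀ : ‖(ξ : EuclideanSpace ℝ (Fin (d+1))) - (y : EuclideanSpace ℝ (Fin (d+1)))‖ < δ k₀ :=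
      Nat.find_spec hexk
    have hξcap : ξ ∈ cap d y (δ k₀) := htk₀
    have hlow : δ k₀ / 4 ≤ ‖x - (ξ : EuclideanSpace ℝ (Fin (d+1)))‖ := by
      rcases Nat.eq_zero_or_pos k₀ with h0 | hpos
      · have hδ0 : δ k₀ = ε := by rw [h0]; simp [hδdef]
        rw [hδ0]
        linarith [hdistlow ξ]
      · have hm : ¬ (‖(ξ : EuclideanSpace ℝ (Fin (d+1))) - (y : EuclideanSpace ℝ (Fin (d+1)))‖
            < δ (k₀ - 1)) := Nat.find_min hexk (by omega)
        push_neg at hm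
        have hhalf : δ k₀ = 2 * δ (k₀ - 1) := by
          simp only [hδdef]
          rw [← mul_assoc]
          congr 1
          rw [← pow_succ']
          congr 1
          omega
        have htri : ‖(ξ : EuclideanSpace ℝ (Fin (d+1))) - (y : EuclideanSpace ℝ (Fin (d+1)))‖
            ≤ ‖x - (ξ : EuclideanSpace ℝ (Fin (d+1)))‖ + ε := by
          have h2 := dist_triangle (ξ : EuclideanSpace ℝ (Fin (d+1))) x
            (y : EuclideanSpace ℝ (Fin (d+1)))
          rw [dist_eq_norm, dist_eq_norm, dist_eq_norm] at h2
          have h3 : ‖x - (y : EuclideanSpace ℝ (Fin (d+1)))‖ = ε := by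
            rw [norm_sub_rev]; exact hxy
          rw [h3] at h2
          calc ‖(ξ : EuclideanSpace ℝ (Fin (d+1))) - (y : EuclideanSpace ℝ (Fin (d+1)))‖
              ≤ ‖(ξ : EuclideanSpace ℝ (Fin (d+1))) - x‖ + ε := h2
          _ = ‖x - (ξ : EuclideanSpace ℝ (Fin (d+1)))‖ + ε := by rw [norm_sub_rev]
        have hD := hdistlow ξ
        linarith [hm, htri, hD]
    have hP : spherePoissonKernel d x (ξ : EuclideanSpace ℝ (Fin (d+1))) ≤ c k₀ := by
      rw [spherePoissonKernel, hxnorm]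
      have hnum : 1 - r^2 ≤ 2 * ε := by rw [hεdef]; nlinarith
      have hden : (δ k₀ / 4)^(d+1) ≤ ‖x - (ξ : EuclideanSpace ℝ (Fin (d+1)))‖^(d+1) :=
        pow_le_pow_left₀ (by positivity) hlow _
      have hδk := hδpos k₀
      calc (1 - r^2) / ‖x - (ξ : EuclideanSpace ℝ (Fin (d+1)))‖^(d+1)
          ≤ (2*ε) / (δ k₀/4)^(d+1) := div_le_div₀ (by positivity) hnum (by positivity) hden
      _ = c k₀ := by
          rw [hcdef]
          simp only [hK]
          rw [div_pow]
          rw [div_div_eq_mul_div]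
          rw [div_eq_div_iff (by positivity) (by positivity)]
          ring
    have hcF : c k₀ ≤ F ξ := by
      rw [hFdef]
      have hmem : k₀ ∈ Finset.range (N+1) := Finset.mem_range.2 (by omega)
      have hterm : (cap d y (δ k₀)).indicator (fun _ => c k₀) ξ = c k₀ :=
        Set.indicator_of_mem hξcap _
      calc c k₀ = (cap d y (δ k₀)).indicator (fun _ => c k₀) ξ := hterm.symm
      _ ≤ ∑ k ∈ Finset.range (N+1), (cap d y (δ k)).indicator (fun _ => c k) ξ :=
        Finset.single_le_sum (f := fun k => (cap d y (δ k)).indicator (fun _ => c k) ξ)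
          (fun k _ => Set.indicator_nonneg (fun _ _ => (hcpos k).le) ξ) hmem
    linarith
  have hFint : Integrable F ν := by
    apply integrable_finset_sum
    intro k _
    exact (integrable_const (c k)).indicator (cap_measurableSet d y (δ k))
  have hnorm1 : ‖∫ ξ, ((spherePoissonKernel d x (ξ : EuclideanSpace ℝ (Fin (d+1))) : ℝ) : ℂ) * g ξ ∂ν‖
      ≤ ∫ ξ, spherePoissonKernel d x (ξ : EuclideanSpace ℝ (Fin (d+1))) ∂ν := by
    calc ‖∫ ξ, ((spherePoissonKernel d x (ξ : EuclideanSpace ℝ (Fin (d+1))) : ℝ) : ℂ) * g ξ ∂ν‖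
        ≤ ∫ ξ, ‖((spherePoissonKernel d x (ξ : EuclideanSpace ℝ (Fin (d+1))) : ℝ) : ℂ) * g ξ‖ ∂ν :=
          norm_integral_le_integral_norm _
    _ = ∫ ξ, spherePoissonKernel d x (ξ : EuclideanSpace ℝ (Fin (d+1))) ∂ν := by
        apply integral_congr_ae
        apply ae_of_all
        intro ξ
        dsimp only
        rw [norm_mul, hg1 ξ, mul_one, Complex.norm_real, Real.norm_eq_abs,
          abs_of_nonneg (hPnonneg ξ)]
  have hint2 : ∫ ξ, spherePoissonKernel d x (ξ : EuclideanSpace ℝ (Fin (d+1))) ∂ν ≤ ∫ ξ, F ξ ∂ν :=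
    integral_mono_of_nonneg (Filter.Eventually.of_forall hPnonneg) hFint
      (Filter.Eventually.of_forall hPF)
  have hFval : ∫ ξ, F ξ ∂ν = ∑ k ∈ Finset.range (N+1), c k * (ν (cap d y (δ k))).toReal := by
    rw [hFdef]
    rw [integral_finset_sum _
      (fun k _ => (integrable_const (c k)).indicator (cap_measurableSet d y (δ k)))]
    apply Finset.sum_congr rfl
    intro k _
    rw [integral_indicator_const _ (cap_measurableSet d y (δ k)), smul_eq_mul, mul_comm]; rfl
  obtain ⟨k₁, hk₁mem, hk₁max⟩ := Finset.exists_max_image (Finset.range (N+1))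
    (fun k => (ν (cap d y (δ k))).toReal / ((sphereMeasure d) (cap d y (δ k))).toReal)
    ⟨0, Finset.mem_range.2 (Nat.succ_pos N)⟩
  set ρ := (ν (cap d y (δ k₁))).toReal / ((sphereMeasure d) (cap d y (δ k₁))).toReal with hρdef
  have hρ0 : 0 ≤ ρ := div_nonneg ENNReal.toReal_nonneg ENNReal.toReal_nonneg
  have hterm : ∀ k ∈ Finset.range (N+1),
      c k * (ν (cap d y (δ k))).toReal ≤ (K*A) * (1/2)^k * ρ := by
    intro k hk
    have hσpos := sphereMeasure_cap_pos d y (hδpos k)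
    have hratio : (ν (cap d y (δ k))).toReal / ((sphereMeasure d) (cap d y (δ k))).toReal ≤ ρ :=
      hk₁max k hk
    have h5 : (ν (cap d y (δ k))).toReal ≤ ρ * ((sphereMeasure d) (cap d y (δ k))).toReal := by
      have := (div_mul_cancel₀ (ν (cap d y (δ k))).toReal hσpos.ne').symm
      rw [this]
      exact mul_le_mul_of_nonneg_right hratio hσpos.le
    have hσle : ((sphereMeasure d) (cap d y (δ k))).toReal ≤ A * (δ k)^d := by
      have h1 := sphereMeasure_cap_le d y (hδpos k)
      have h3 : δ k ≤ 4 := hδ4 k (Nat.lt_succ_iff.1 (Finset.mem_range.1 hk))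
      have h2 : (1 + 2*(δ k)) * (2*(δ k))^d ≤ 9 * (2^d * (δ k)^d) := by
        rw [mul_pow]
        apply mul_le_mul_of_nonneg_right (by linarith) (by positivity)
      calc ((sphereMeasure d) (cap d y (δ k))).toReal
          ≤ (T.toReal)⁻¹ * ((d + 1) * ((1 + 2*(δ k)) * (2*(δ k))^d)) := h1
      _ ≤ (T.toReal)⁻¹ * ((d + 1) * (9 * (2^d * (δ k)^d))) := by
          apply mul_le_mul_of_nonneg_left _ (by positivity)
          apply mul_le_mul_of_nonneg_left h2 (by positivity)
      _ = A * (δ k)^d := by rw [hA]; ring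
    have hδk := hδpos k
    have hεδ : ε / δ k = (1/2)^k := by
      have hd : δ k = 2^k * ε := rfl
      rw [hd, one_div, inv_pow, inv_eq_one_div,
        div_eq_div_iff (by positivity) (by positivity)]
      ring
    calc c k * (ν (cap d y (δ k))).toReal
        ≤ c k * (ρ * ((sphereMeasure d) (cap d y (δ k))).toReal) :=
          mul_le_mul_of_nonneg_left h5 (hcpos k).le
    _ ≤ c k * (ρ * (A * (δ k)^d)) :=
          mul_le_mul_of_nonneg_left (mul_le_mul_of_nonneg_left hσle hρ0) (hcpos k).le
    _ = (K * A) * (ε / δ k) * ρ := by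
          rw [hcdef]
          simp only
          field_simp
          ring
    _ = (K * A) * (1/2)^k * ρ := by rw [hεδ]
  have hsum : ∑ k ∈ Finset.range (N+1), c k * (ν (cap d y (δ k))).toReal
      ≤ 2 * (K*A) * ρ := by
    calc ∑ k ∈ Finset.range (N+1), c k * (ν (cap d y (δ k))).toReal
        ≤ ∑ k ∈ Finset.range (N+1), (K*A) * (1/2)^k * ρ := Finset.sum_le_sum hterm
    _ = (K*A*ρ) * ∑ k ∈ Finset.range (N+1), (1/2)^k := by
        rw [Finset.mul_sum]
        apply Finset.sum_congr rfl
        intro k _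
        ring
    _ ≤ (K*A*ρ) * 2 := by
        apply mul_le_mul_of_nonneg_left (sum_geometric_two_le _) (by positivity)
    _ = 2 * (K*A) * ρ := by ring
  refine ⟨δ k₁, ?_, ?_⟩
  · have h1 : (1:ℝ) ≤ 2^k₁ := one_le_pow₀ (by norm_num)
    calc 1 - r = ε := hεdef.symm
    _ ≤ 2^k₁ * ε := le_mul_of_one_le_left hε0.le h1
    _ = δ k₁ := rfl
  · calc ‖∫ ξ, ((spherePoissonKernel d x (ξ : EuclideanSpace ℝ (Fin (d+1))) : ℝ) : ℂ) * g ξ ∂ν‖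
        ≤ ∫ ξ, spherePoissonKernel d x (ξ : EuclideanSpace ℝ (Fin (d+1))) ∂ν := hnorm1
    _ ≤ ∫ ξ, F ξ ∂ν := hint2
    _ = ∑ k ∈ Finset.range (N+1), c k * (ν (cap d y (δ k))).toReal := hFval
    _ ≤ 2 * (K*A) * ρ := hsum
    _ = 2 * (K * A) * (ν (cap d y (δ k₁))).toReal
          / ((sphereMeasure d) (cap d y (δ k₁))).toReal := by
        rw [hρdef, mul_div_assoc]
end

section
/- There exists a constant C > 0 (depending only on d) such that for every r ∈ (1/2, 1) and every y ∈ S^d, the integral of the Poisson kernel over the spherical cap of radius 1-r centered at y satisfies ∫_{κ(y,1-r)} P(ry, ξ) dσ(ξ) ≥ C. -/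
open Metric Set MeasureTheory

/-- The Poisson kernel on the unit ball of `ℝ^{d+1}`. -/
noncomputable def poissonKernelBall (d : ℕ) (x ξ : EuclideanSpace ℝ (Fin (d + 1))) : ℝ :=
  (1 - ‖x‖ ^ 2) / ‖x - ξ‖ ^ (d + 1)

open scoped Pointwise ENNReal

section Aux

lemma cap_isOpen (d : ℕ) (y : sphere (0 : EuclideanSpace ℝ (Fin (d + 1))) 1) (δ : ℝ) :
    IsOpen (cap d y δ) :=
  isOpen_lt ((continuous_subtype_val.sub continuous_const).norm) continuous_const

/-- A small ball centered on the axis of the cap, at radius `t ∈ [5/8, 7/8]`, is contained in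
the cone over the cap. -/
lemma ball_subset_cone (d : ℕ) (y : sphere (0 : EuclideanSpace ℝ (Fin (d + 1))) 1) {δ t : ℝ}
    (hδ0 : 0 < δ) (hδ : δ ≤ 1 / 2) (ht1 : 5 / 8 ≤ t) (ht2 : t ≤ 7 / 8) :
    ball (t • (y : EuclideanSpace ℝ (Fin (d + 1)))) (δ / 8) ⊆
      Ioo (0 : ℝ) 1 • (Subtype.val '' cap d y δ) := by
  intro x hx
  have hy : ‖(y : EuclideanSpace ℝ (Fin (d + 1)))‖ = 1 := mem_sphere_zero_iff_norm.1 y.2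
  rw [mem_ball, dist_eq_norm] at hx
  have hty : ‖t • (y : EuclideanSpace ℝ (Fin (d + 1)))‖ = t := by
    rw [norm_smul, hy, mul_one, Real.norm_eq_abs, abs_of_nonneg (by linarith)]
  have hxt : |‖x‖ - t| ≤ ‖x - t • (y : EuclideanSpace ℝ (Fin (d + 1)))‖ := by
    calc |‖x‖ - t| = |‖x‖ - ‖t • (y : EuclideanSpace ℝ (Fin (d + 1)))‖| := by rw [hty]
      _ ≤ ‖x - t • (y : EuclideanSpace ℝ (Fin (d + 1)))‖ := abs_norm_sub_norm_le _ _
  have habs := abs_le.1 hxt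
  have hδ8 : δ / 8 ≤ 1 / 16 := by linarith
  have hn1 : (1 : ℝ) / 2 < ‖x‖ := by linarith [habs.1]
  have hn2 : ‖x‖ < 1 := by linarith [habs.2]
  have hn0 : (0 : ℝ) < ‖x‖ := by linarith
  set u : EuclideanSpace ℝ (Fin (d + 1)) := ‖x‖⁻¹ • x with hu_def
  have hu_norm : ‖u‖ = 1 := by
    rw [hu_def, norm_smul, Real.norm_eq_abs, abs_of_pos (inv_pos.2 hn0),
      inv_mul_cancel₀ hn0.ne']
  have hu_sphere : u ∈ sphere (0 : EuclideanSpace ℝ (Fin (d + 1))) 1 :=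
    mem_sphere_zero_iff_norm.2 hu_norm
  have hx_ny : ‖x - ‖x‖ • (y : EuclideanSpace ℝ (Fin (d + 1)))‖ < δ / 4 := by
    have heq : x - ‖x‖ • (y : EuclideanSpace ℝ (Fin (d + 1))) =
        (x - t • (y : EuclideanSpace ℝ (Fin (d + 1)))) +
          (t - ‖x‖) • (y : EuclideanSpace ℝ (Fin (d + 1))) := by
      rw [sub_smul]; abel
    rw [heq]
    have h2 : ‖(t - ‖x‖) • (y : EuclideanSpace ℝ (Fin (d + 1)))‖ = |t - ‖x‖| := by
      rw [norm_smul, hy, mul_one, Real.norm_eq_abs]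
    have h3 : |t - ‖x‖| ≤ ‖x - t • (y : EuclideanSpace ℝ (Fin (d + 1)))‖ := by
      rw [abs_sub_comm]; exact hxt
    calc ‖(x - t • (y : EuclideanSpace ℝ (Fin (d + 1)))) +
          (t - ‖x‖) • (y : EuclideanSpace ℝ (Fin (d + 1)))‖
        ≤ ‖x - t • (y : EuclideanSpace ℝ (Fin (d + 1)))‖ +
            ‖(t - ‖x‖) • (y : EuclideanSpace ℝ (Fin (d + 1)))‖ := norm_add_le _ _
      _ < δ / 8 + δ / 8 := by rw [h2]; exact add_lt_add_of_lt_of_le hx (h3.trans hx.le)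
      _ = δ / 4 := by ring
  have hu_cap : ‖u - (y : EuclideanSpace ℝ (Fin (d + 1)))‖ < δ := by
    have heq : u - (y : EuclideanSpace ℝ (Fin (d + 1))) =
        ‖x‖⁻¹ • (x - ‖x‖ • (y : EuclideanSpace ℝ (Fin (d + 1)))) := by
      rw [smul_sub, smul_smul, inv_mul_cancel₀ hn0.ne', one_smul, hu_def]
    rw [heq, norm_smul, Real.norm_eq_abs, abs_of_pos (inv_pos.2 hn0)]
    have hinv : ‖x‖⁻¹ ≤ 2 := by
      rw [inv_le_comm₀ hn0 (by norm_num)]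
      linarith
    calc ‖x‖⁻¹ * ‖x - ‖x‖ • (y : EuclideanSpace ℝ (Fin (d + 1)))‖
        ≤ 2 * ‖x - ‖x‖ • (y : EuclideanSpace ℝ (Fin (d + 1)))‖ :=
          mul_le_mul_of_nonneg_right hinv (norm_nonneg _)
      _ < 2 * (δ / 4) := by linarith
      _ ≤ δ := by linarith
  have hmem : u ∈ Subtype.val '' cap d y δ := ⟨⟨u, hu_sphere⟩, hu_cap, rfl⟩
  have hx_eq : x = ‖x‖ • u := by rw [hu_def, smul_inv_smul₀ hn0.ne']
  rw [hx_eq]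
  exact Set.smul_mem_smul ⟨hn0, hn2⟩ hmem

lemma toSphere_univ_eq (d : ℕ) :
    (volume : Measure (EuclideanSpace ℝ (Fin (d + 1)))).toSphere Set.univ =
      (d + 1 : ℝ≥0∞) * volume (ball (0 : EuclideanSpace ℝ (Fin (d + 1))) 1) := by
  rw [Measure.toSphere_apply_univ, finrank_euclideanSpace_fin]
  push_cast
  ring

lemma toSphere_univ_ne_zero (d : ℕ) :
    (volume : Measure (EuclideanSpace ℝ (Fin (d + 1)))).toSphere Set.univ ≠ 0 := by
  rw [toSphere_univ_eq]
  exact mul_ne_zero (by simp) (measure_ball_pos _ _ one_pos).ne'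

lemma toSphere_univ_ne_top (d : ℕ) :
    (volume : Measure (EuclideanSpace ℝ (Fin (d + 1)))).toSphere Set.univ ≠ ⊤ := by
  rw [toSphere_univ_eq]
  exact ENNReal.mul_ne_top (by simp) measure_ball_lt_top.ne

lemma sphereMeasure_le_one (d : ℕ) (s : Set (sphere (0 : EuclideanSpace ℝ (Fin (d + 1))) 1)) :
    sphereMeasure d s ≤ 1 := by
  rw [sphereMeasure, Measure.smul_apply, smul_eq_mul]
  calc ((volume : Measure (EuclideanSpace ℝ (Fin (d + 1)))).toSphere Set.univ)⁻¹ *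
        (volume : Measure (EuclideanSpace ℝ (Fin (d + 1)))).toSphere s
      ≤ ((volume : Measure (EuclideanSpace ℝ (Fin (d + 1)))).toSphere Set.univ)⁻¹ *
        (volume : Measure (EuclideanSpace ℝ (Fin (d + 1)))).toSphere Set.univ :=
        mul_le_mul_right (measure_mono (subset_univ s)) _
    _ = 1 := ENNReal.inv_mul_cancel (toSphere_univ_ne_zero d) (toSphere_univ_ne_top d)

lemma sphereMeasure_ne_top (d : ℕ) (s : Set (sphere (0 : EuclideanSpace ℝ (Fin (d + 1))) 1)) :
    sphereMeasure d s ≠ ⊤ :=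
  ((sphereMeasure_le_one d s).trans_lt (by norm_num)).ne

/-- Main measure lower bound: the cap of radius `δ` has measure at least
`δ^d / (2 * 8^(d+1))`. -/
lemma cap_measure_ge (d : ℕ) (y : sphere (0 : EuclideanSpace ℝ (Fin (d + 1))) 1) {δ : ℝ}
    (hδ0 : 0 < δ) (hδ : δ ≤ 1 / 2) :
    ENNReal.ofReal (δ ^ d / (2 * 8 ^ (d + 1))) ≤ sphereMeasure d (cap d y δ) := by
  set B : ℝ≥0∞ := volume (ball (0 : EuclideanSpace ℝ (Fin (d + 1))) 1) with hB_def
  set N : ℕ := ⌊1 / δ⌋₊ with hN_def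
  have hδinv : (2 : ℝ) ≤ 1 / δ := by
    rw [le_div_iff₀ hδ0]; linarith
  have hNle : (N : ℝ) ≤ 1 / δ := Nat.floor_le (by positivity)
  have hNge : 1 / (2 * δ) ≤ (N : ℝ) := by
    have h1 : 1 / δ - 1 ≤ (N : ℝ) := by
      have := (Nat.lt_floor_add_one (1 / δ)).le
      linarith
    have h2 : 1 / (2 * δ) ≤ 1 / δ - 1 := by
      rw [div_sub' hδ0.ne', div_le_div_iff₀ (by positivity) hδ0]
      nlinarith
    linarith
  have hNδ : (N : ℝ) * δ ≤ 1 := by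
    rw [← le_div_iff₀ hδ0]; exact hNle
  have hy : ‖(y : EuclideanSpace ℝ (Fin (d + 1)))‖ = 1 := mem_sphere_zero_iff_norm.1 y.2
  set c : ℕ → EuclideanSpace ℝ (Fin (d + 1)) :=
    fun k => (5 / 8 + k * (δ / 4)) • (y : EuclideanSpace ℝ (Fin (d + 1))) with hc_def
  -- each ball is inside the cone over the cap
  have hsub : ∀ k ∈ Finset.range N, ball (c k) (δ / 8) ⊆
      Ioo (0 : ℝ) 1 • (Subtype.val '' cap d y δ) := by
    intro k hk
    rw [Finset.mem_range] at hk
    have hk' : (k : ℝ) ≤ (N : ℝ) - 1 := by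
      have : (k : ℝ) + 1 ≤ (N : ℝ) := by exact_mod_cast hk
      linarith
    have ht1 : (5 : ℝ) / 8 ≤ 5 / 8 + (k : ℝ) * (δ / 4) := by
      have : (0 : ℝ) ≤ (k : ℝ) * (δ / 4) := by positivity
      linarith
    have ht2 : 5 / 8 + (k : ℝ) * (δ / 4) ≤ 7 / 8 := by
      have hkδ : (k : ℝ) * δ ≤ 1 - δ := by nlinarith
      nlinarith
    exact ball_subset_cone d y hδ0 hδ ht1 ht2
  -- the balls are pairwise disjoint
  have hdisj : (↑(Finset.range N) : Set ℕ).PairwiseDisjoint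
      (fun k => ball (c k) (δ / 8)) := by
    intro j _ k _ hjk
    apply ball_disjoint_ball
    have hdist : dist (c j) (c k) = |(j : ℝ) - (k : ℝ)| * (δ / 4) := by
      rw [hc_def]
      simp only
      rw [dist_eq_norm, ← sub_smul, norm_smul, hy, mul_one, Real.norm_eq_abs]
      have heq : (5 / 8 + (j : ℝ) * (δ / 4)) - (5 / 8 + (k : ℝ) * (δ / 4)) =
          ((j : ℝ) - (k : ℝ)) * (δ / 4) := by ring
      rw [heq, abs_mul, abs_of_pos (by positivity : (0 : ℝ) < δ / 4)]
    have h1 : (1 : ℝ) ≤ |(j : ℝ) - (k : ℝ)| := by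
      have hne : (j : ℤ) ≠ (k : ℤ) := by exact_mod_cast hjk
      have h2 : (1 : ℤ) ≤ |(j : ℤ) - (k : ℤ)| := Int.one_le_abs (sub_ne_zero.2 hne)
      have h3 : ((|(j : ℤ) - (k : ℤ)| : ℤ) : ℝ) = |(j : ℝ) - (k : ℝ)| := by
        push_cast
        rfl
      calc (1 : ℝ) = ((1 : ℤ) : ℝ) := by norm_num
        _ ≤ ((|(j : ℤ) - (k : ℤ)| : ℤ) : ℝ) := by exact_mod_cast h2
        _ = |(j : ℝ) - (k : ℝ)| := h3
    rw [hdist]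
    nlinarith
  -- volume of the cone is at least the sum of the volumes of the balls
  have hball : ∀ k ∈ Finset.range N, volume (ball (c k) (δ / 8)) =
      ENNReal.ofReal ((δ / 8) ^ (d + 1)) * B := by
    intro k _
    rw [hB_def, Measure.addHaar_ball _ _ (by positivity : (0 : ℝ) ≤ δ / 8),
      finrank_euclideanSpace_fin]
  have hvol : (N : ℝ≥0∞) * (ENNReal.ofReal ((δ / 8) ^ (d + 1)) * B) ≤
      volume (Ioo (0 : ℝ) 1 • (Subtype.val '' cap d y δ)) := by
    calc (N : ℝ≥0∞) * (ENNReal.ofReal ((δ / 8) ^ (d + 1)) * B)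
        = ∑ k ∈ Finset.range N, volume (ball (c k) (δ / 8)) := by
          rw [Finset.sum_congr rfl hball, Finset.sum_const, Finset.card_range, nsmul_eq_mul]
      _ = volume (⋃ k ∈ Finset.range N, ball (c k) (δ / 8)) :=
          (measure_biUnion_finset hdisj (fun k _ => measurableSet_ball)).symm
      _ ≤ volume (Ioo (0 : ℝ) 1 • (Subtype.val '' cap d y δ)) :=
          measure_mono (Set.iUnion₂_subset hsub)
  -- rewrite the sphere measure of the cap
  have hts : sphereMeasure d (cap d y δ) =
      ((volume : Measure (EuclideanSpace ℝ (Fin (d + 1)))).toSphere Set.univ)⁻¹ *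
        ((d + 1 : ℝ≥0∞) * volume (Ioo (0 : ℝ) 1 • (Subtype.val '' cap d y δ))) := by
    rw [sphereMeasure, Measure.smul_apply, smul_eq_mul,
      Measure.toSphere_apply' _ (cap_measurableSet d y δ), finrank_euclideanSpace_fin]
    push_cast
    ring
  have key : (N : ℝ≥0∞) * ENNReal.ofReal ((δ / 8) ^ (d + 1)) ≤
      sphereMeasure d (cap d y δ) := by
    rw [hts]
    calc (N : ℝ≥0∞) * ENNReal.ofReal ((δ / 8) ^ (d + 1))
        = (N : ℝ≥0∞) * ENNReal.ofReal ((δ / 8) ^ (d + 1)) *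
            (((volume : Measure (EuclideanSpace ℝ (Fin (d + 1)))).toSphere Set.univ)⁻¹ *
              ((d + 1 : ℝ≥0∞) * B)) := by
          rw [← toSphere_univ_eq,
            ENNReal.inv_mul_cancel (toSphere_univ_ne_zero d) (toSphere_univ_ne_top d), mul_one]
      _ = ((volume : Measure (EuclideanSpace ℝ (Fin (d + 1)))).toSphere Set.univ)⁻¹ *
            ((d + 1 : ℝ≥0∞) * ((N : ℝ≥0∞) * (ENNReal.ofReal ((δ / 8) ^ (d + 1)) * B))) := by
          ring
      _ ≤ _ := by gcongr
  refine le_trans ?_ key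
  have harith : δ ^ d / (2 * 8 ^ (d + 1)) = (1 / (2 * δ)) * (δ / 8) ^ (d + 1) := by
    rw [div_pow, pow_succ δ d]
    field_simp
  calc ENNReal.ofReal (δ ^ d / (2 * 8 ^ (d + 1)))
      = ENNReal.ofReal (1 / (2 * δ)) * ENNReal.ofReal ((δ / 8) ^ (d + 1)) := by
        rw [harith, ENNReal.ofReal_mul (by positivity)]
    _ ≤ (N : ℝ≥0∞) * ENNReal.ofReal ((δ / 8) ^ (d + 1)) := by
        gcongr
        calc ENNReal.ofReal (1 / (2 * δ)) ≤ ENNReal.ofReal (N : ℝ) :=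
              ENNReal.ofReal_le_ofReal hNge
          _ = (N : ℝ≥0∞) := ENNReal.ofReal_natCast N

end Aux

theorem integral_poissonKernel_cap_ge (d : ℕ) :
    ∃ C : ℝ, 0 < C ∧
      ∀ r ∈ Ioo (1 / 2 : ℝ) 1, ∀ y : sphere (0 : EuclideanSpace ℝ (Fin (d + 1))) 1,
        C ≤ ∫ ξ in cap d y (1 - r),
              poissonKernelBall d (r • (y : EuclideanSpace ℝ (Fin (d + 1)))) ξ
              ∂(sphereMeasure d) := by
  refine ⟨3 / (2 ^ (d + 3) * 8 ^ (d + 1)), by positivity, ?_⟩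
  rintro r ⟨hr1, hr2⟩ y
  set δ : ℝ := 1 - r with hδ_def
  have hδ0 : 0 < δ := by rw [hδ_def]; linarith
  have hδh : δ ≤ 1 / 2 := by rw [hδ_def]; linarith
  have hy : ‖(y : EuclideanSpace ℝ (Fin (d + 1)))‖ = 1 := mem_sphere_zero_iff_norm.1 y.2
  have hr0 : (0 : ℝ) < r := by linarith
  have hry : ‖r • (y : EuclideanSpace ℝ (Fin (d + 1)))‖ = r := by
    rw [norm_smul, hy, mul_one, Real.norm_eq_abs, abs_of_pos hr0]
  -- positivity of the denominator, uniformly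
  have hden_lb : ∀ ξ : sphere (0 : EuclideanSpace ℝ (Fin (d + 1))) 1,
      δ ≤ ‖r • (y : EuclideanSpace ℝ (Fin (d + 1))) - (ξ : EuclideanSpace ℝ (Fin (d + 1)))‖ := by
    intro ξ
    have hξ : ‖(ξ : EuclideanSpace ℝ (Fin (d + 1)))‖ = 1 := mem_sphere_zero_iff_norm.1 ξ.2
    have h1 : ‖(ξ : EuclideanSpace ℝ (Fin (d + 1)))‖ -
        ‖r • (y : EuclideanSpace ℝ (Fin (d + 1)))‖ ≤
        ‖(ξ : EuclideanSpace ℝ (Fin (d + 1))) - r • (y : EuclideanSpace ℝ (Fin (d + 1)))‖ :=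
      norm_sub_norm_le _ _
    rw [hξ, hry, norm_sub_rev] at h1
    linarith
  have hden_pos : ∀ ξ : sphere (0 : EuclideanSpace ℝ (Fin (d + 1))) 1,
      (0 : ℝ) < ‖r • (y : EuclideanSpace ℝ (Fin (d + 1))) -
        (ξ : EuclideanSpace ℝ (Fin (d + 1)))‖ :=
    fun ξ => lt_of_lt_of_le hδ0 (hden_lb ξ)
  -- lower bound for the kernel on the cap
  set m : ℝ := (3 / 2 * δ) / (2 * δ) ^ (d + 1) with hm_def
  have hm_pos : 0 < m := by rw [hm_def]; positivity
  have hlow : ∀ ξ ∈ cap d y δ,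
      m ≤ poissonKernelBall d (r • (y : EuclideanSpace ℝ (Fin (d + 1)))) ξ := by
    intro ξ hξ
    have hnum : 3 / 2 * δ ≤ 1 - ‖r • (y : EuclideanSpace ℝ (Fin (d + 1)))‖ ^ 2 := by
      rw [hry, hδ_def]; nlinarith
    have hub : ‖r • (y : EuclideanSpace ℝ (Fin (d + 1))) -
        (ξ : EuclideanSpace ℝ (Fin (d + 1)))‖ ≤ 2 * δ := by
      have heq : r • (y : EuclideanSpace ℝ (Fin (d + 1))) -
          (ξ : EuclideanSpace ℝ (Fin (d + 1))) =
          (r - 1) • (y : EuclideanSpace ℝ (Fin (d + 1))) +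
            ((y : EuclideanSpace ℝ (Fin (d + 1))) - (ξ : EuclideanSpace ℝ (Fin (d + 1)))) := by
        rw [sub_smul, one_smul]; abel
      have hcap : ‖(ξ : EuclideanSpace ℝ (Fin (d + 1))) -
          (y : EuclideanSpace ℝ (Fin (d + 1)))‖ < δ := hξ
      calc ‖r • (y : EuclideanSpace ℝ (Fin (d + 1))) - (ξ : EuclideanSpace ℝ (Fin (d + 1)))‖
          = ‖(r - 1) • (y : EuclideanSpace ℝ (Fin (d + 1))) +
              ((y : EuclideanSpace ℝ (Fin (d + 1))) -
                (ξ : EuclideanSpace ℝ (Fin (d + 1))))‖ := by rw [heq]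
        _ ≤ ‖(r - 1) • (y : EuclideanSpace ℝ (Fin (d + 1)))‖ +
              ‖(y : EuclideanSpace ℝ (Fin (d + 1))) -
                (ξ : EuclideanSpace ℝ (Fin (d + 1)))‖ := norm_add_le _ _
        _ ≤ δ + δ := by
            have h1 : ‖(r - 1) • (y : EuclideanSpace ℝ (Fin (d + 1)))‖ = δ := by
              rw [norm_smul, hy, mul_one, Real.norm_eq_abs, abs_of_nonpos (by linarith), hδ_def]
              ring
            have h2 : ‖(y : EuclideanSpace ℝ (Fin (d + 1))) -
                (ξ : EuclideanSpace ℝ (Fin (d + 1)))‖ ≤ δ := by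
              rw [norm_sub_rev]; exact hcap.le
            linarith
        _ = 2 * δ := by ring
    have hpow_pos : (0 : ℝ) < ‖r • (y : EuclideanSpace ℝ (Fin (d + 1))) -
        (ξ : EuclideanSpace ℝ (Fin (d + 1)))‖ ^ (d + 1) := pow_pos (hden_pos ξ) _
    have hpow_le : ‖r • (y : EuclideanSpace ℝ (Fin (d + 1))) -
        (ξ : EuclideanSpace ℝ (Fin (d + 1)))‖ ^ (d + 1) ≤ (2 * δ) ^ (d + 1) :=
      pow_le_pow_left₀ (hden_pos ξ).le hub _
    rw [hm_def]
    unfold poissonKernelBall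
    exact div_le_div₀ (by linarith) hnum hpow_pos hpow_le
  -- integrability
  have hcont : Continuous (fun ξ : sphere (0 : EuclideanSpace ℝ (Fin (d + 1))) 1 =>
      poissonKernelBall d (r • (y : EuclideanSpace ℝ (Fin (d + 1)))) ξ) := by
    unfold poissonKernelBall
    exact continuous_const.div
      (((continuous_const.sub continuous_subtype_val).norm).pow _)
      (fun ξ => (pow_pos (hden_pos ξ) _).ne')
  have hint : IntegrableOn (fun ξ : sphere (0 : EuclideanSpace ℝ (Fin (d + 1))) 1 =>
      poissonKernelBall d (r • (y : EuclideanSpace ℝ (Fin (d + 1)))) ξ) (cap d y δ)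
      (sphereMeasure d) := by
    apply Measure.integrableOn_of_bounded (M := (1 - r ^ 2) / δ ^ (d + 1))
      (sphereMeasure_ne_top d _) hcont.aestronglyMeasurable
    filter_upwards with ξ
    have h1 : (0 : ℝ) ≤ 1 - ‖r • (y : EuclideanSpace ℝ (Fin (d + 1)))‖ ^ 2 := by
      rw [hry]; nlinarith
    have hpow1 : (0 : ℝ) < δ ^ (d + 1) := pow_pos hδ0 _
    have hpow2 : δ ^ (d + 1) ≤ ‖r • (y : EuclideanSpace ℝ (Fin (d + 1))) -
        (ξ : EuclideanSpace ℝ (Fin (d + 1)))‖ ^ (d + 1) :=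
      pow_le_pow_left₀ hδ0.le (hden_lb ξ) _
    rw [Real.norm_eq_abs]
    unfold poissonKernelBall
    rw [abs_of_nonneg (div_nonneg h1 (pow_nonneg (norm_nonneg _) _))]
    have : 1 - ‖r • (y : EuclideanSpace ℝ (Fin (d + 1)))‖ ^ 2 = 1 - r ^ 2 := by rw [hry]
    rw [this]
    exact div_le_div₀ (by nlinarith) le_rfl hpow1 hpow2
  -- put it together
  have hμ := cap_measure_ge d y hδ0 hδh
  have hμtoReal : δ ^ d / (2 * 8 ^ (d + 1)) ≤ (sphereMeasure d (cap d y δ)).toReal :=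
    (ENNReal.ofReal_le_iff_le_toReal (sphereMeasure_ne_top d _)).1 hμ
  have hmain := setIntegral_ge_of_const_le (cap_measurableSet d y δ)
    (sphereMeasure_ne_top d _) hlow hint
  have harith : 3 / (2 ^ (d + 3) * 8 ^ (d + 1) : ℝ) = m * (δ ^ d / (2 * 8 ^ (d + 1))) := by
    rw [hm_def, mul_pow, pow_succ δ d]
    have h2 : ((2 : ℝ) ^ (d + 1)) ≠ 0 := by positivity
    have h8 : ((8 : ℝ) ^ (d + 1)) ≠ 0 := by positivity
    have hd : (δ : ℝ) ^ d ≠ 0 := by positivity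
    field_simp
    ring
  calc (3 : ℝ) / (2 ^ (d + 3) * 8 ^ (d + 1))
      = m * (δ ^ d / (2 * 8 ^ (d + 1))) := harith
    _ ≤ m * (sphereMeasure d (cap d y δ)).toReal :=
        mul_le_mul_of_nonneg_left hμtoReal hm_pos.le
    _ ≤ _ := by rw [mul_comm]; exact hmain
end

section
/- Let μ be a finite complex Borel measure on S^d, let τ : (0,1) → (0,∞) be nonincreasing with τ(x) → ∞ as x → 0⁺, and let φ : (0,∞) → (0,∞) be a dimension function (continuous, nondecreasing, with φ(0⁺) = 0) satisfying φ(s) = O(τ(s)·s^d). Then the set E(τ,μ) = {y ∈ S^d : limsup_{r→1} |P[μ](ry)|/τ(1-r) = +∞} has φ-Hausdorff measure zero: H^φ(E(τ,μ)) = 0. -/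
open Metric Set MeasureTheory Filter
open scoped ENNReal Topology

/-- The Poisson kernel on the unit ball of `ℝ^{d+1}`. -/
noncomputable def poissonKernelSphere (d : ℕ) (x ξ : EuclideanSpace ℝ (Fin (d + 1))) : ℝ :=
  (1 - ‖x‖ ^ 2) / ‖x - ξ‖ ^ (d + 1)

lemma frostman {X : Type*} [MetricSpace X] [MeasurableSpace X] [BorelSpace X]
    (ν : Measure X) [IsFiniteMeasure ν] (φ : ℝ → ℝ)
    (hφpos : ∀ s > (0:ℝ), 0 < φ s) (hφmono : MonotoneOn φ (Ioi 0))
    (hdiam : ∀ (y : X) (t : ℝ), 0 < t → (0:ℝ≥0∞) < EMetric.diam (closedBall y t))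
    (A : Set X)
    (hA : ∀ y ∈ A, ∀ c > (0:ℝ), ∀ ε, 0 < ε → ∃ t : ℝ, 0 < t ∧ t < ε ∧
      ENNReal.ofReal (c * φ (10 * t)) < ν (closedBall y t)) :
    Measure.mkMetric (fun t => ENNReal.ofReal (φ t.toReal)) A = 0 := by
  set m : ℝ≥0∞ → ℝ≥0∞ := fun t => ENNReal.ofReal (φ t.toReal) with hm
  have key : ∀ c : ℝ, 0 < c → Measure.mkMetric m A ≤ ν univ / ENNReal.ofReal c := by
    intro c hc
    -- choose radii
    have hch : ∀ n : ℕ, ∀ y : X, ∃ t : ℝ, y ∈ A → (0 < t ∧ t < ((n:ℝ)+1)⁻¹ ∧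
        ENNReal.ofReal (c * φ (10 * t)) < ν (closedBall y t)) := by
      intro n y
      by_cases hy : y ∈ A
      · obtain ⟨t, h1, h2, h3⟩ := hA y hy c hc ((n:ℝ)+1)⁻¹ (by positivity)
        exact ⟨t, fun _ => ⟨h1, h2, h3⟩⟩
      · exact ⟨1, fun h => absurd h hy⟩
    choose T hT using hch
    have hV : ∀ n : ℕ, ∃ u ⊆ A, (u.PairwiseDisjoint fun b => closedBall b (T n b)) ∧
        ∀ a ∈ A, ∃ b ∈ u, closedBall a (T n a) ⊆ closedBall b (4 * T n b) := by
      intro n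
      exact Vitali.exists_disjoint_subfamily_covering_enlargement_closedBall A id (T n)
        (((n:ℝ)+1)⁻¹) (fun a ha => (hT n a ha).2.1.le) 4 (by norm_num)
    choose u huA hdisj hcov using hV
    have hmeaspos : ∀ n, ∀ b ∈ u n, 0 < ν (closedBall b (T n b)) := by
      intro n b hb
      have hb' := hT n b (huA n hb)
      refine lt_of_le_of_lt zero_le hb'.2.2
    have hcnt : ∀ n, (u n).Countable := by
      intro n
      have : Pairwise (Function.onFun Disjoint fun i : ↥(u n) => closedBall (i : X) (T n i)) := by
        intro i j hij
        exact hdisj n i.2 j.2 (Subtype.coe_injective.ne hij)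
      have h2 := Measure.countable_meas_pos_of_disjoint_iUnion (μ := ν)
        (fun i : ↥(u n) => measurableSet_closedBall) this
      have h3 : {i : ↥(u n) | 0 < ν (closedBall (i : X) (T n i))} = univ := by
        ext i; simpa using hmeaspos n i i.2
      rw [h3] at h2
      have : Countable ↥(u n) := countable_univ_iff.mp h2
      exact Set.countable_coe_iff.mp this
    haveI : ∀ n, Countable ↥(u n) := fun n => (hcnt n).to_subtype
    have hle := Measure.mkMetric_le_liminf_tsum (ι := fun n => ↥(u n)) A
      (fun n => ENNReal.ofReal (8 * ((n:ℝ)+1)⁻¹))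
      (by
        have h1 : Tendsto (fun n : ℕ => 8 * ((n:ℝ)+1)⁻¹) atTop (𝓝 0) := by
          have h := tendsto_one_div_add_atTop_nhds_zero_nat (𝕜 := ℝ)
          simpa [one_div] using h.const_mul (8:ℝ)
        simpa using ENNReal.tendsto_ofReal h1)
      (fun n i => closedBall (i : X) (4 * T n i))
      (by
        refine Eventually.of_forall fun n => fun i => ?_
        obtain ⟨b, hb⟩ := i
        have ht := hT n b (huA n hb)
        have h4 : (0:ℝ) ≤ 4 * T n b := by nlinarith [ht.1]
        calc EMetric.diam (closedBall b (4 * T n b))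
            ≤ 2 * ENNReal.ofReal (4 * T n b) := by
              rw [← Metric.emetric_closedBall h4]; exact EMetric.diam_closedBall
          _ ≤ ENNReal.ofReal (8 * ((n:ℝ)+1)⁻¹) := by
              rw [← ENNReal.ofReal_ofNat, ← ENNReal.ofReal_mul (by norm_num)]
              have h2 := ht.2.1
              refine ENNReal.ofReal_le_ofReal ?_
              show (2:ℝ) * (4 * T n b) ≤ 8 * ((n:ℝ)+1)⁻¹
              linarith) 
      (by
        refine Eventually.of_forall fun n => fun a ha => ?_
        obtain ⟨b, hb, hsub⟩ := hcov n a ha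
        have : a ∈ closedBall a (T n a) := mem_closedBall_self (hT n a ha).1.le
        exact mem_iUnion.mpr ⟨⟨b, hb⟩, hsub this⟩) m
    refine hle.trans ?_
    have hbound : ∀ n : ℕ, (∑' i : ↥(u n), m (EMetric.diam (closedBall (i:X) (4 * T n i))))
        ≤ ν univ / ENNReal.ofReal c := by
      intro n
      have step1 : ∀ i : ↥(u n), m (EMetric.diam (closedBall (i:X) (4 * T n i)))
          ≤ ν (closedBall (i:X) (T n i)) / ENNReal.ofReal c := by
        rintro ⟨b, hb⟩
        show m (EMetric.diam (closedBall b (4 * T n b))) ≤ ν (closedBall b (T n b)) / ENNReal.ofReal c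
        have ht := hT n b (huA n hb)
        have h4 : (0:ℝ) < 4 * T n b := by nlinarith [ht.1]
        set D := EMetric.diam (closedBall b (4 * T n b)) with hD
        have hDle : D ≤ ENNReal.ofReal (8 * T n b) := by
          rw [hD, ← Metric.emetric_closedBall h4.le]
          refine EMetric.diam_closedBall.trans ?_
          rw [← ENNReal.ofReal_ofNat, ← ENNReal.ofReal_mul (by norm_num)]
          refine ENNReal.ofReal_le_ofReal ?_
          show (2:ℝ) * (4 * T n b) ≤ 8 * T n b
          linarith
        have hDpos : 0 < D := hdiam _ _ h4
        have hDfin : D ≠ ⊤ := (hDle.trans_lt ENNReal.ofReal_lt_top).ne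
        have hDr : D.toReal ≤ 8 * T n b := ENNReal.toReal_le_of_le_ofReal (by nlinarith [ht.1]) hDle
        have hDrpos : 0 < D.toReal := ENNReal.toReal_pos hDpos.ne' hDfin
        have hφle : φ D.toReal ≤ φ (10 * T n b) := by
          refine hφmono hDrpos (by simp; nlinarith [ht.1]) (by nlinarith [ht.1])
        have : m D ≤ ENNReal.ofReal (φ (10 * T n b)) := ENNReal.ofReal_le_ofReal hφle
        refine this.trans ?_
        rw [ENNReal.le_div_iff_mul_le (Or.inl (by simp [hc])) (Or.inl ENNReal.ofReal_ne_top)]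
        calc ENNReal.ofReal (φ (10 * T n b)) * ENNReal.ofReal c
            = ENNReal.ofReal (c * φ (10 * T n b)) := by
              rw [← ENNReal.ofReal_mul (le_of_lt (hφpos _ (by nlinarith [ht.1])))]; ring_nf
          _ ≤ ν (closedBall b (T n b)) := ht.2.2.le
      calc (∑' i : ↥(u n), m (EMetric.diam (closedBall (i:X) (4 * T n i))))
          ≤ ∑' i : ↥(u n), ν (closedBall (i:X) (T n i)) / ENNReal.ofReal c :=
            ENNReal.tsum_le_tsum step1
        _ = (∑' i : ↥(u n), ν (closedBall (i:X) (T n i))) / ENNReal.ofReal c := by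
            simp only [div_eq_mul_inv, ENNReal.tsum_mul_right]
        _ ≤ ν univ / ENNReal.ofReal c := by
            gcongr
            rw [← measure_iUnion ?_ (fun i => measurableSet_closedBall)]
            · exact measure_mono (subset_univ _)
            · intro i j hij
              exact hdisj n i.2 j.2 (Subtype.coe_injective.ne hij)
    refine liminf_le_of_frequently_le ?_ (by isBoundedDefault)
    exact Frequently.of_forall hbound
  refine le_antisymm ?_ zero_le
  have hm' : Tendsto (fun n : ℕ => ENNReal.ofReal ((n:ℝ)+1)) atTop (𝓝 ⊤) :=
    ENNReal.tendsto_ofReal_atTop.comp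
      (tendsto_atTop_add_const_right _ 1 tendsto_natCast_atTop_atTop)
  have hdiv : Tendsto (fun n : ℕ => ν univ / ENNReal.ofReal ((n:ℝ)+1)) atTop (𝓝 0) := by
    have := ENNReal.Tendsto.const_div (a := ν univ) hm' (Or.inr (measure_ne_top ν univ))
    simpa [ENNReal.div_top] using this
  exact ge_of_tendsto' hdiv fun n => key ((n:ℝ)+1) (by positivity)




section kernel

variable {d : ℕ}

local notation "S" => sphere (0 : EuclideanSpace ℝ (Fin (d + 1))) 1

lemma norm_of_mem_sphere' (y : S) : ‖(y : EuclideanSpace ℝ (Fin (d + 1)))‖ = 1 := by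
  have := y.2
  rwa [mem_sphere_zero_iff_norm] at this

lemma norm_smul_sphere (y : S) {r : ℝ} (hr0 : 0 ≤ r) :
    ‖r • (y : EuclideanSpace ℝ (Fin (d + 1)))‖ = r := by
  rw [norm_smul, norm_of_mem_sphere', Real.norm_eq_abs, abs_of_nonneg hr0, mul_one]

lemma dist_lower (y ξ : S) {r : ℝ} (hr0 : 0 ≤ r) (hr1 : r < 1) :
    1 - r ≤ ‖r • (y : EuclideanSpace ℝ (Fin (d + 1))) - ↑ξ‖ := by
  have h1 : ‖(ξ : EuclideanSpace ℝ (Fin (d + 1)))‖ - ‖r • (y : EuclideanSpace ℝ (Fin (d + 1)))‖ ≤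
      ‖r • (y : EuclideanSpace ℝ (Fin (d + 1))) - ↑ξ‖ := by
    rw [norm_sub_rev]
    exact norm_sub_norm_le _ _
  rwa [norm_of_mem_sphere', norm_smul_sphere y hr0] at h1

lemma dist_lower' (y ξ : S) {r : ℝ} (hr0 : 0 ≤ r) (hr1 : r < 1) :
    dist y ξ - (1 - r) ≤ ‖r • (y : EuclideanSpace ℝ (Fin (d + 1))) - ↑ξ‖ := by
  have h2 : dist (y : EuclideanSpace ℝ (Fin (d + 1))) (ξ : EuclideanSpace ℝ (Fin (d + 1))) ≤
      ‖(y : EuclideanSpace ℝ (Fin (d+1))) - r • (y : EuclideanSpace ℝ (Fin (d + 1)))‖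
      + ‖r • (y : EuclideanSpace ℝ (Fin (d + 1))) - ↑ξ‖ := by
    rw [dist_eq_norm]
    exact norm_sub_le_norm_sub_add_norm_sub _ _ _
  have h3 : ‖(y : EuclideanSpace ℝ (Fin (d+1))) - r • (y : EuclideanSpace ℝ (Fin (d + 1)))‖ = 1 - r := by
    have : (y : EuclideanSpace ℝ (Fin (d+1))) - r • (y : EuclideanSpace ℝ (Fin (d + 1)))
        = (1 - r) • (y : EuclideanSpace ℝ (Fin (d+1))) := by
      rw [sub_smul, one_smul]
    rw [this, norm_smul, norm_of_mem_sphere', Real.norm_eq_abs, abs_of_nonneg (by linarith), mul_one]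
  rw [Subtype.dist_eq]
  linarith
  
lemma kernel_nonneg (y ξ : S) {r : ℝ} (hr0 : 0 ≤ r) (hr1 : r < 1) :
    0 ≤ poissonKernelSphere d (r • (y : EuclideanSpace ℝ (Fin (d + 1)))) ↑ξ := by
  unfold poissonKernelSphere
  apply div_nonneg
  · rw [norm_smul_sphere y hr0]; nlinarith
  · positivity

lemma kernel_le (y ξ : S) {r : ℝ} (hr0 : 0 ≤ r) (hr1 : r < 1) :
    poissonKernelSphere d (r • (y : EuclideanSpace ℝ (Fin (d + 1)))) ↑ξ ≤
      2 ^ (d + 2) * (1 - r) / max (1 - r) (dist y ξ) ^ (d + 1) := by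
  have hd1 := dist_lower y ξ hr0 hr1
  have hd2 := dist_lower' y ξ hr0 hr1
  set N := ‖r • (y : EuclideanSpace ℝ (Fin (d + 1))) - ↑ξ‖ with hN
  have hM : max (1 - r) (dist y ξ) ≤ 2 * N := by
    rcases max_cases (1 - r) (dist y ξ) with ⟨h, _⟩ | ⟨h, _⟩ <;> rw [h] <;> linarith
  have hMpos : 0 < max (1 - r) (dist y ξ) := lt_of_lt_of_le (by linarith) (le_max_left _ _)
  have hNpos : 0 < N := by linarith
  unfold poissonKernelSphere
  rw [norm_smul_sphere y hr0, ← hN]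
  have key : (1 - r ^ 2) / N ^ (d + 1) ≤ (2 * (1 - r)) / ((max (1 - r) (dist y ξ) / 2) ^ (d + 1)) := by
    apply div_le_div₀ (by nlinarith) (by nlinarith) (by positivity)
    apply pow_le_pow_left₀ (by positivity) (by linarith)
  refine key.trans ?_
  rw [div_pow, div_div_eq_mul_div, div_le_div_iff₀ (by positivity) (by positivity)]
  ring_nf
  exact le_rfl
end kernel

section more
variable {d : ℕ}
local notation "S" => sphere (0 : EuclideanSpace ℝ (Fin (d + 1))) 1

lemma kernel_continuous {x : EuclideanSpace ℝ (Fin (d + 1))} (hx : ‖x‖ < 1) :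
    Continuous (fun ξ : S => poissonKernelSphere d x ↑ξ) := by
  unfold poissonKernelSphere
  apply Continuous.div continuous_const
  · exact ((continuous_const.sub continuous_subtype_val).norm.pow _)
  · intro ξ
    apply pow_ne_zero
    rw [norm_ne_zero_iff, sub_ne_zero]
    intro h
    rw [h] at hx
    rw [norm_of_mem_sphere' ξ] at hx
    linarith

lemma kernel_integrable (ν : Measure S) [IsFiniteMeasure ν]
    {x : EuclideanSpace ℝ (Fin (d + 1))} (hx : ‖x‖ < 1) :
    Integrable (fun ξ : S => poissonKernelSphere d x ↑ξ) ν :=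
  (kernel_continuous hx).integrable_of_hasCompactSupport
    (isClosed_tsupport _).isCompact

lemma norm_integral_le_kernel (ν : Measure S) (g : S → ℂ) (hg : ∀ ξ, ‖g ξ‖ = 1)
    {x : EuclideanSpace ℝ (Fin (d + 1))} (hP : ∀ ξ : S, 0 ≤ poissonKernelSphere d x ↑ξ) :
    ‖∫ ξ, (poissonKernelSphere d x ↑ξ : ℂ) * g ξ ∂ν‖ ≤ ∫ ξ, poissonKernelSphere d x ↑ξ ∂ν := by
  refine (norm_integral_le_integral_norm _).trans (le_of_eq ?_)
  have h : ∀ ξ : S, ‖(poissonKernelSphere d x ↑ξ : ℂ) * g ξ‖ = poissonKernelSphere d x ↑ξ := fun ξ => by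
    rw [norm_mul, hg, mul_one, Complex.norm_real, Real.norm_eq_abs, abs_of_nonneg (hP ξ)]
  simp only [h]

lemma sphere_dist_le (y ξ : S) : dist y ξ ≤ 2 := by
  rw [Subtype.dist_eq]
  calc dist (y : EuclideanSpace ℝ (Fin (d+1))) ↑ξ ≤ ‖(y : EuclideanSpace ℝ (Fin (d+1)))‖ + ‖(ξ : EuclideanSpace ℝ (Fin (d+1)))‖ := dist_le_norm_add_norm _ _
    _ = 2 := by rw [norm_of_mem_sphere', norm_of_mem_sphere']; norm_num

lemma pointwise_sum_bound (y : S) {δ : ℝ} (hδ : 0 < δ) {K : ℕ} (hK : 2 ≤ 2 ^ K * δ) (ξ : S) :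
    δ / max δ (dist y ξ) ^ (d + 1) ≤ ∑ k ∈ Finset.range (K + 1),
      ((2:ℝ) ^ (d + 1) * (1 / 2) ^ k / ((2:ℝ) ^ k * δ) ^ d) *
        (closedBall y ((2:ℝ) ^ k * δ)).indicator (fun _ => (1:ℝ)) ξ := by
  have hex : ∃ k : ℕ, dist y ξ ≤ 2 ^ k * δ := ⟨K, (sphere_dist_le y ξ).trans hK⟩
  set k₀ := Nat.find hex with hk₀def
  have hk₀K : k₀ ≤ K := Nat.find_le ((sphere_dist_le y ξ).trans hK)
  have hk₀ : dist y ξ ≤ 2 ^ k₀ * δ := Nat.find_spec hex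
  have hterm : ((2:ℝ) ^ (d + 1) * (1 / 2) ^ k₀ / ((2:ℝ) ^ k₀ * δ) ^ d) *
      (closedBall y ((2:ℝ) ^ k₀ * δ)).indicator (fun _ => (1:ℝ)) ξ
      = (2:ℝ) ^ (d + 1) * (1 / 2) ^ k₀ / ((2:ℝ) ^ k₀ * δ) ^ d := by
    rw [Set.indicator_of_mem, mul_one]
    rw [mem_closedBall, dist_comm]
    exact hk₀
  have hsum : ((2:ℝ) ^ (d + 1) * (1 / 2) ^ k₀ / ((2:ℝ) ^ k₀ * δ) ^ d) *
      (closedBall y ((2:ℝ) ^ k₀ * δ)).indicator (fun _ => (1:ℝ)) ξ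
      ≤ ∑ k ∈ Finset.range (K + 1),
      ((2:ℝ) ^ (d + 1) * (1 / 2) ^ k / ((2:ℝ) ^ k * δ) ^ d) *
        (closedBall y ((2:ℝ) ^ k * δ)).indicator (fun _ => (1:ℝ)) ξ := by
    apply Finset.single_le_sum (f := fun k => ((2:ℝ) ^ (d + 1) * (1 / 2) ^ k / ((2:ℝ) ^ k * δ) ^ d) *
        (closedBall y ((2:ℝ) ^ k * δ)).indicator (fun _ => (1:ℝ)) ξ)
    · intro k _
      apply mul_nonneg (by positivity)
      exact Set.indicator_nonneg (fun _ _ => zero_le_one) _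
    · exact Finset.mem_range.mpr (Nat.lt_succ_of_le hk₀K)
  refine le_trans ?_ hsum
  rw [hterm]
  rcases Nat.eq_zero_or_pos k₀ with h0 | hpos
  · rw [h0]
    simp only [pow_zero, one_mul]
    have h1 : δ / max δ (dist y ξ) ^ (d + 1) ≤ δ / δ ^ (d + 1) := by
      apply div_le_div_of_nonneg_left hδ.le (by positivity)
      apply pow_le_pow_left₀ hδ.le (le_max_left _ _)
    refine h1.trans ?_
    rw [pow_succ, div_le_div_iff₀ (by positivity) (by positivity)]
    have h2 : (1:ℝ) ≤ 2 ^ d := one_le_pow₀ (by norm_num)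
    have h3 : (0:ℝ) < δ ^ d * δ := mul_pos (pow_pos hδ d) hδ
    ring_nf
    nlinarith [h2, h3]
  · obtain ⟨j, hj⟩ : ∃ j, k₀ = j + 1 := ⟨k₀ - 1, (Nat.succ_pred_eq_of_pos hpos).symm⟩
    have hmin : ¬ dist y ξ ≤ 2 ^ j * δ := Nat.find_min hex (by omega)
    push_neg at hmin
    have hmax : (2:ℝ) ^ j * δ < max δ (dist y ξ) := lt_of_lt_of_le hmin (le_max_right _ _)
    have hLHS : δ / max δ (dist y ξ) ^ (d + 1) ≤ δ / ((2:ℝ) ^ j * δ) ^ (d + 1) := by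
      apply div_le_div_of_nonneg_left hδ.le (by positivity)
      apply pow_le_pow_left₀ (by positivity) hmax.le
    refine hLHS.trans (le_of_eq ?_)
    rw [hj, one_div, inv_pow]
    rw [div_eq_div_iff (by positivity) (by positivity)]
    field_simp
    ring
end more

section integralbound
variable {d : ℕ}
local notation "S" => sphere (0 : EuclideanSpace ℝ (Fin (d + 1))) 1

lemma integral_kernel_bound (ν : Measure S) [IsFiniteMeasure ν] (y : S) {r : ℝ}
    (hr : 1/2 ≤ r) (hr1 : r < 1) {K : ℕ} (hK : 2 ≤ 2 ^ K * (1 - r)) :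
    ∫ ξ, poissonKernelSphere d (r • (y : EuclideanSpace ℝ (Fin (d + 1)))) ↑ξ ∂ν ≤
      2 ^ (2*d + 3) * ∑ k ∈ Finset.range (K + 1),
        (1/2:ℝ) ^ k * ((ν (closedBall y ((2:ℝ) ^ k * (1 - r)))).toReal / ((2:ℝ) ^ k * (1 - r)) ^ d) := by
  set δ := 1 - r with hδdef
  have hδ : 0 < δ := by simp [hδdef]; linarith
  have hr0 : (0:ℝ) ≤ r := by linarith
  -- pointwise bound
  have step : ∀ ξ : S, poissonKernelSphere d (r • (y : EuclideanSpace ℝ (Fin (d + 1)))) ↑ξ ≤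
      ∑ k ∈ Finset.range (K + 1), (closedBall y ((2:ℝ) ^ k * δ)).indicator
        (fun _ => (2:ℝ) ^ (d + 2) * ((2:ℝ) ^ (d + 1) * (1/2) ^ k / ((2:ℝ) ^ k * δ) ^ d)) ξ := by
    intro ξ
    refine (kernel_le y ξ hr0 hr1).trans ?_
    have hpb := pointwise_sum_bound y hδ hK ξ
    calc (2:ℝ) ^ (d + 2) * (1 - r) / max (1 - r) (dist y ξ) ^ (d + 1)
        = 2 ^ (d + 2) * (δ / max δ (dist y ξ) ^ (d + 1)) := by rw [← hδdef]; ring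
      _ ≤ 2 ^ (d + 2) * ∑ k ∈ Finset.range (K + 1),
          ((2:ℝ) ^ (d + 1) * (1 / 2) ^ k / ((2:ℝ) ^ k * δ) ^ d) *
            (closedBall y ((2:ℝ) ^ k * δ)).indicator (fun _ => (1:ℝ)) ξ := by
          exact mul_le_mul_of_nonneg_left hpb (by positivity)
      _ = ∑ k ∈ Finset.range (K + 1), (closedBall y ((2:ℝ) ^ k * δ)).indicator
          (fun _ => (2:ℝ) ^ (d + 2) * ((2:ℝ) ^ (d + 1) * (1/2) ^ k / ((2:ℝ) ^ k * δ) ^ d)) ξ := by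
          rw [Finset.mul_sum]
          apply Finset.sum_congr rfl
          intro k _
          by_cases hmem : ξ ∈ closedBall y ((2:ℝ) ^ k * δ)
          · rw [Set.indicator_of_mem hmem, Set.indicator_of_mem hmem]; ring
          · rw [Set.indicator_of_notMem hmem, Set.indicator_of_notMem hmem]; ring
  have hxnorm : ‖r • (y : EuclideanSpace ℝ (Fin (d + 1)))‖ < 1 := by
    rw [norm_smul_sphere y hr0]; linarith
  have hint1 : Integrable (fun ξ : S => poissonKernelSphere d (r • (y : EuclideanSpace ℝ (Fin (d + 1)))) ↑ξ) ν :=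
    kernel_integrable ν hxnorm
  have hint2 : Integrable (fun ξ : S => ∑ k ∈ Finset.range (K + 1),
      (closedBall y ((2:ℝ) ^ k * δ)).indicator
        (fun _ => (2:ℝ) ^ (d + 2) * ((2:ℝ) ^ (d + 1) * (1/2) ^ k / ((2:ℝ) ^ k * δ) ^ d)) ξ) ν := by
    apply integrable_finset_sum
    intro k _
    exact (integrable_const _).indicator measurableSet_closedBall
  calc ∫ ξ, poissonKernelSphere d (r • (y : EuclideanSpace ℝ (Fin (d + 1)))) ↑ξ ∂ν
      ≤ ∫ ξ, (∑ k ∈ Finset.range (K + 1), (closedBall y ((2:ℝ) ^ k * δ)).indicator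
          (fun _ => (2:ℝ) ^ (d + 2) * ((2:ℝ) ^ (d + 1) * (1/2) ^ k / ((2:ℝ) ^ k * δ) ^ d)) ξ) ∂ν :=
        integral_mono hint1 hint2 step
    _ = ∑ k ∈ Finset.range (K + 1), (ν (closedBall y ((2:ℝ) ^ k * δ))).toReal •
          ((2:ℝ) ^ (d + 2) * ((2:ℝ) ^ (d + 1) * (1/2) ^ k / ((2:ℝ) ^ k * δ) ^ d)) := by
        rw [integral_finset_sum _ (fun k _ => (integrable_const _).indicator measurableSet_closedBall)]
        apply Finset.sum_congr rfl
        intro k _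
        exact integral_indicator_const _ measurableSet_closedBall
    _ = 2 ^ (2*d + 3) * ∑ k ∈ Finset.range (K + 1),
        (1/2:ℝ) ^ k * ((ν (closedBall y ((2:ℝ) ^ k * δ))).toReal / ((2:ℝ) ^ k * δ) ^ d) := by
        rw [Finset.mul_sum]
        apply Finset.sum_congr rfl
        intro k _
        rw [smul_eq_mul]
        ring
end integralbound



section diam
variable {d : ℕ}
local notation "S" => sphere (0 : EuclideanSpace ℝ (Fin (d + 1))) 1

lemma norm_of_mem_sphere'' (y : S) : ‖(y : EuclideanSpace ℝ (Fin (d + 1)))‖ = 1 := by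
  have := y.2
  rwa [mem_sphere_zero_iff_norm] at this

lemma sphere_diam_pos (hd : 0 < d) (y : S) {t : ℝ} (ht : 0 < t) :
    (0:ℝ≥0∞) < EMetric.diam (closedBall y t) := by
  have hconn : ConnectedSpace ↥(sphere (0 : EuclideanSpace ℝ (Fin (d + 1))) 1) := by
    have h2 : (1:Cardinal) < Module.rank ℝ (EuclideanSpace ℝ (Fin (d + 1))) := by
      rw [← Module.finrank_eq_rank, finrank_euclideanSpace_fin]
      exact_mod_cast (by omega : 1 < d + 1)
    exact isConnected_iff_connectedSpace.mp (isConnected_sphere h2 0 zero_le_one)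
  by_contra h
  push_neg at h
  have hzero : EMetric.diam (closedBall y t) = 0 := le_antisymm h zero_le
  have hsub : (closedBall y t : Set S).Subsingleton := EMetric.diam_eq_zero_iff.mp hzero
  have hball : (ball y t : Set S) = {y} := by
    apply Subset.antisymm
    · exact fun z hz => hsub (ball_subset_closedBall hz) (mem_closedBall_self ht.le)
    · exact singleton_subset_iff.mpr (mem_ball_self ht)
  have hopen : IsOpen ({y} : Set S) := hball ▸ isOpen_ball
  have hclopen : IsClopen ({y} : Set S) := ⟨isClosed_singleton, hopen⟩
  rcases isClopen_iff.mp hclopen with hemp | huniv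
  · exact absurd rfl (eq_empty_iff_forall_notMem.mp hemp y)
  · -- antipode
    have hmem : -(y : EuclideanSpace ℝ (Fin (d + 1))) ∈ sphere (0 : EuclideanSpace ℝ (Fin (d + 1))) 1 := by
      rw [mem_sphere_zero_iff_norm, norm_neg, norm_of_mem_sphere'']
    set z : S := ⟨-(y : EuclideanSpace ℝ (Fin (d + 1))), hmem⟩ with hz
    have hzy : z = y := by
      have : z ∈ ({y} : Set S) := huniv ▸ mem_univ z
      simpa using this
    have : -(y : EuclideanSpace ℝ (Fin (d + 1))) = (y : EuclideanSpace ℝ (Fin (d + 1))) := by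
      simpa [hz] using congrArg Subtype.val hzy
    have hy0 : (y : EuclideanSpace ℝ (Fin (d + 1))) = 0 := by
      have h2 : (2:ℝ) • (y : EuclideanSpace ℝ (Fin (d + 1))) = 0 := by
        rw [two_smul]
        nth_rewrite 1 [← this]
        simp
      have := smul_eq_zero.mp h2
      rcases this with h | h
      · norm_num at h
      · exact h
    have := norm_of_mem_sphere'' y
    rw [hy0] at this
    simp at this
end diam


/-- A finite complex Borel measure `μ` on the sphere is encoded through its polar
decomposition `dμ = g d|μ|`, where `ν = |μ|` is a finite positive measure and `g` is
a measurable function of modulus `1`.  If `τ` is nonincreasing with `τ(0⁺) = ∞` and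
`φ` is a dimension function with `φ(s) = O(τ(s) s^d)` as `s → 0⁺`, then the set
of points `y` where `limsup_{r→1} |P[μ](ry)|/τ(1-r) = ∞` is `H^φ`-null. -/
theorem hausdorff_gauge_measure_exceptional_eq_zero (d : ℕ)
    (ν : Measure (sphere (0 : EuclideanSpace ℝ (Fin (d + 1))) 1)) [IsFiniteMeasure ν]
    (g : sphere (0 : EuclideanSpace ℝ (Fin (d + 1))) 1 → ℂ)
    (hgm : Measurable g) (hg : ∀ ξ, ‖g ξ‖ = 1)
    (τ : ℝ → ℝ) (hτpos : ∀ x ∈ Ioo (0 : ℝ) 1, 0 < τ x)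
    (hτanti : AntitoneOn τ (Ioo (0 : ℝ) 1))
    (hτtop : Tendsto τ (nhdsWithin 0 (Ioi 0)) atTop)
    (φ : ℝ → ℝ) (hφpos : ∀ s > (0 : ℝ), 0 < φ s)
    (hφmono : MonotoneOn φ (Ioi 0)) (hφcont : ContinuousOn φ (Ioi 0))
    (hφzero : Tendsto φ (nhdsWithin 0 (Ioi 0)) (nhds 0))
    (hO : φ =O[nhdsWithin 0 (Ioi 0)] fun s => τ s * s ^ d) :
    Measure.mkMetric (fun t => ENNReal.ofReal (φ t.toReal))
      {y : sphere (0 : EuclideanSpace ℝ (Fin (d + 1))) 1 |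
        ∀ M : ℝ, ∃ᶠ r in nhdsWithin (1 : ℝ) (Iio 1),
          M < ‖∫ ξ, (poissonKernelSphere d (r • (y : EuclideanSpace ℝ (Fin (d + 1)))) ξ : ℂ) * g ξ ∂ν‖
                / τ (1 - r)} = 0 := by
  classical
  obtain ⟨C', hC'pos, hC'⟩ := hO.exists_pos
  have hC'ev := hC'.bound
  have hev1 : ∀ᶠ s in 𝓝[>] (0:ℝ), 1 ≤ τ s := hτtop.eventually_ge_atTop 1
  have hev2 : ∀ᶠ s in 𝓝[>] (0:ℝ), s < 1/2 := by
    have h : Ioo (0:ℝ) (1/2) ∈ 𝓝[>] (0:ℝ) :=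
      Ioo_mem_nhdsGT_of_mem (by constructor <;> norm_num)
    filter_upwards [h] with s hs using hs.2
  obtain ⟨a₀', ha₀'mem, ha₀'⟩ :=
    mem_nhdsGT_iff_exists_Ioo_subset.mp (hev1.and (hC'ev.and hev2))
  have ha₀'pos : 0 < a₀' := ha₀'mem
  have hsmall : ∀ s : ℝ, 0 < s → s < a₀' → (1 ≤ τ s ∧ φ s ≤ C' * (τ s * s ^ d) ∧ s < 1/2) := by
    intro s hs hsa
    obtain ⟨h1, h2, h3⟩ := ha₀' ⟨hs, hsa⟩
    refine ⟨h1, ?_, h3⟩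
    have hτs : 0 < τ s := hτpos s ⟨hs, by linarith⟩
    have hnrm : ‖τ s * s ^ d‖ = τ s * s ^ d := by
      rw [Real.norm_eq_abs, abs_of_nonneg (by positivity)]
    calc φ s ≤ |φ s| := le_abs_self _
      _ = ‖φ s‖ := rfl
      _ ≤ C' * ‖τ s * s ^ d‖ := h2
      _ = C' * (τ s * s ^ d) := by rw [hnrm]
  set A : Set ↥(sphere (0 : EuclideanSpace ℝ (Fin (d + 1))) 1) :=
    {y | ∀ c > (0:ℝ), ∀ ε : ℝ, 0 < ε → ∃ t : ℝ, 0 < t ∧ t < ε ∧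
      ENNReal.ofReal (c * φ (10 * t)) < ν (closedBall y t)} with hAdef
  rcases Nat.eq_zero_or_pos d with hd0 | hdpos
  · -- d = 0 : the exceptional set is empty
    subst hd0
    have hE : {y : sphere (0 : EuclideanSpace ℝ (Fin (0 + 1))) 1 |
        ∀ M : ℝ, ∃ᶠ r in nhdsWithin (1 : ℝ) (Iio 1),
          M < ‖∫ ξ, (poissonKernelSphere 0 (r • (y : EuclideanSpace ℝ (Fin (0 + 1)))) ξ : ℂ) * g ξ ∂ν‖
                / τ (1 - r)} = (∅ : Set _) := by
      rw [eq_empty_iff_forall_notMem]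
      intro y hy
      simp only [mem_setOf_eq] at hy
      set M₀ := 2 * (ν univ).toReal + 1 with hM₀
      have hev : ∀ᶠ r' in 𝓝[<] (1:ℝ), r' ∈ Ioo (max (1/2) (1 - a₀')) 1 :=
        Ioo_mem_nhdsLT_of_mem ⟨max_lt (by norm_num) (by linarith), le_refl 1⟩
      obtain ⟨r, hMr, hrIoo⟩ := ((hy M₀).and_eventually hev).exists
      obtain ⟨hrlow, hrlt1⟩ := hrIoo
      have hrhalf : 1/2 ≤ r := le_of_lt (lt_of_le_of_lt (le_max_left _ _) hrlow)
      have hr0 : (0:ℝ) ≤ r := by linarith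
      have hδpos : 0 < 1 - r := by linarith
      have hδa₀ : 1 - r < a₀' := by
        have h1 : 1 - a₀' < r := lt_of_le_of_lt (le_max_right _ _) hrlow
        linarith
      have hτδ1 : 1 ≤ τ (1-r) := (hsmall _ hδpos hδa₀).1
      have hbound : ∀ ξ : sphere (0 : EuclideanSpace ℝ (Fin (0+1))) 1,
          poissonKernelSphere 0 (r • (y : EuclideanSpace ℝ (Fin (0+1)))) ↑ξ ≤ 2 := by
        intro ξ
        have hd1 := dist_lower y ξ hr0 hrlt1
        unfold poissonKernelSphere
        rw [norm_smul_sphere y hr0]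
        have hNpos : 0 < ‖r • (y : EuclideanSpace ℝ (Fin (0+1))) - ↑ξ‖ := by linarith
        calc (1 - r^2)/‖r • (y : EuclideanSpace ℝ (Fin (0+1))) - ↑ξ‖^(0+1)
            = (1-r^2)/‖r • (y : EuclideanSpace ℝ (Fin (0+1))) - ↑ξ‖ := by rw [pow_one]
          _ ≤ (1-r^2)/(1-r) := div_le_div_of_nonneg_left (by nlinarith) hδpos hd1
          _ = 1 + r := by field_simp; ring
          _ ≤ 2 := by linarith
      have hle2 : ‖∫ ξ, (poissonKernelSphere 0 (r • (y : EuclideanSpace ℝ (Fin (0+1)))) ξ : ℂ) * g ξ ∂ν‖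
          ≤ 2 * (ν univ).toReal := by
        refine (norm_integral_le_kernel ν g hg (fun ξ => kernel_nonneg y ξ hr0 hrlt1)).trans ?_
        calc ∫ ξ, poissonKernelSphere 0 (r • (y : EuclideanSpace ℝ (Fin (0+1)))) ↑ξ ∂ν
            ≤ ∫ _ξ, (2:ℝ) ∂ν := by
              refine integral_mono (kernel_integrable ν ?_) (integrable_const 2) hbound
              rw [norm_smul_sphere y hr0]; linarith
          _ = (ν univ).toReal * 2 := by rw [integral_const, smul_eq_mul]; rfl
          _ = 2 * (ν univ).toReal := by ring
      have hτdiv : ‖∫ ξ, (poissonKernelSphere 0 (r • (y : EuclideanSpace ℝ (Fin (0+1)))) ξ : ℂ) * g ξ ∂ν‖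
            / τ (1-r)
          ≤ ‖∫ ξ, (poissonKernelSphere 0 (r • (y : EuclideanSpace ℝ (Fin (0+1)))) ξ : ℂ) * g ξ ∂ν‖ :=
        div_le_self (norm_nonneg _) hτδ1
      rw [hM₀] at hMr
      linarith [hMr.trans_le (hτdiv.trans hle2)]
    rw [hE]
    exact measure_empty
  · refine measure_mono_null ?_
      (frostman ν φ hφpos hφmono (fun y t ht => sphere_diam_pos hdpos y ht) A (fun y hy => hy))
    intro y hy
    simp only [mem_setOf_eq] at hy
    intro c hc ε₀ hε₀
    set ε := min ε₀ (min (a₀'/10) (1/20)) with hεdef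
    have hεpos : 0 < ε := lt_min hε₀ (lt_min (by positivity) (by norm_num))
    have hεε₀ : ε ≤ ε₀ := min_le_left _ _
    have hεa10 : ε ≤ a₀'/10 := le_trans (min_le_right _ _) (min_le_left _ _)
    have hε20 : ε ≤ 1/20 := le_trans (min_le_right _ _) (min_le_right _ _)
    set νR := (ν univ).toReal with hνR
    have hνR0 : 0 ≤ νR := ENNReal.toReal_nonneg
    set B := νR / ε ^ d + 1 with hB
    have hB1 : 1 ≤ B := by
      have h0 : 0 ≤ νR / ε^d := by positivity
      rw [hB]; linarith
    set X := c * C' * 10 ^ d with hX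
    have hX0 : 0 < X := by rw [hX]; positivity
    set M := 2 ^ (2*d+4) * (B + X + 1) with hM
    have hev : ∀ᶠ r' in 𝓝[<] (1:ℝ), r' ∈ Ioo (max (1/2) (1 - min a₀' ε)) 1 := by
      refine Ioo_mem_nhdsLT_of_mem ⟨max_lt (by norm_num) ?_, le_refl 1⟩
      have := lt_min ha₀'pos hεpos
      linarith
    obtain ⟨r, hMr, hrIoo⟩ := ((hy M).and_eventually hev).exists
    obtain ⟨hrlow, hrlt1⟩ := hrIoo
    have hrhalf : 1/2 ≤ r := le_of_lt (lt_of_le_of_lt (le_max_left _ _) hrlow)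
    have hr0 : (0:ℝ) ≤ r := by linarith
    have hδpos : 0 < 1 - r := by linarith
    have hδmin : 1 - r < min a₀' ε := by
      have h1 : 1 - min a₀' ε < r := lt_of_le_of_lt (le_max_right _ _) hrlow
      linarith
    have hδa₀ : 1 - r < a₀' := lt_of_lt_of_le hδmin (min_le_left _ _)
    have hδε : 1 - r < ε := lt_of_lt_of_le hδmin (min_le_right _ _)
    have hτδ1 : 1 ≤ τ (1-r) := (hsmall _ hδpos hδa₀).1
    have hτδpos : 0 < τ (1-r) := by linarith
    rw [lt_div_iff₀ hτδpos] at hMr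
    obtain ⟨K, hK2⟩ : ∃ K : ℕ, 2 ≤ 2 ^ K * (1-r) := by
      obtain ⟨K, hK⟩ := pow_unbounded_of_one_lt (2/(1-r)) (one_lt_two)
      refine ⟨K, ?_⟩
      rw [div_lt_iff₀ hδpos] at hK
      nlinarith
    have hnormle := norm_integral_le_kernel ν g hg
      (x := r • (y : EuclideanSpace ℝ (Fin (d+1)))) (fun ξ => kernel_nonneg y ξ hr0 hrlt1)
    have hintb := integral_kernel_bound ν y hrhalf hrlt1 hK2
    set a : ℕ → ℝ := fun k =>
      (ν (closedBall y ((2:ℝ) ^ k * (1-r)))).toReal / ((2:ℝ) ^ k * (1-r)) ^ d with ha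
    have ha0 : ∀ k, 0 ≤ a k := fun k =>
      div_nonneg ENNReal.toReal_nonneg (by positivity)
    obtain ⟨k₀, hk₀mem, hk₀max⟩ := Finset.exists_max_image (Finset.range (K+1)) a
      ⟨0, Finset.mem_range.mpr (Nat.succ_pos K)⟩
    have hsum : ∑ k ∈ Finset.range (K+1), (1/2:ℝ)^k * a k ≤ 2 * a k₀ := by
      calc ∑ k ∈ Finset.range (K+1), (1/2:ℝ)^k * a k
          ≤ ∑ k ∈ Finset.range (K+1), (1/2:ℝ)^k * a k₀ := by
            refine Finset.sum_le_sum fun k hk => ?_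
            exact mul_le_mul_of_nonneg_left (hk₀max k hk) (by positivity)
        _ = (∑ k ∈ Finset.range (K+1), (1/2:ℝ)^k) * a k₀ := by rw [Finset.sum_mul]
        _ ≤ 2 * a k₀ := mul_le_mul_of_nonneg_right (sum_geometric_two_le _) (ha0 k₀)
    have hchain : M * τ (1-r) < 2 ^ (2*d+4) * a k₀ := by
      calc M * τ (1-r)
          < ‖∫ ξ, (poissonKernelSphere d (r • (y : EuclideanSpace ℝ (Fin (d+1)))) ξ : ℂ) * g ξ ∂ν‖ := hMr
        _ ≤ ∫ ξ, poissonKernelSphere d (r • (y : EuclideanSpace ℝ (Fin (d+1)))) ↑ξ ∂ν := hnormle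
        _ ≤ 2 ^ (2*d + 3) * ∑ k ∈ Finset.range (K + 1), (1/2:ℝ) ^ k * a k := hintb
        _ ≤ 2 ^ (2*d + 3) * (2 * a k₀) := by
            refine mul_le_mul_of_nonneg_left hsum (by positivity)
        _ = 2 ^ (2*d+4) * a k₀ := by ring
    have hak₀B : B + X * τ (1-r) < a k₀ := by
      have hp : (0:ℝ) < 2^(2*d+4) := by positivity
      have h1 : (B + X + 1) * τ (1-r) < a k₀ := by
        rw [hM, mul_assoc] at hchain
        exact (mul_lt_mul_iff_right₀ hp).mp hchain
      have hexp : (B + X + 1) * τ (1-r) = B * τ (1-r) + X * τ (1-r) + τ (1-r) := by ring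
      have hBτ : B ≤ B * τ (1-r) := le_mul_of_one_le_right (by linarith) hτδ1
      linarith [h1, hexp, hBτ, hτδ1]
    set t := (2:ℝ)^k₀ * (1-r) with htdef
    have htpos : 0 < t := by rw [htdef]; positivity
    have hδt : 1 - r ≤ t := by
      rw [htdef]
      exact le_mul_of_one_le_left hδpos.le (one_le_pow₀ (by norm_num))
    have hat : a k₀ = (ν (closedBall y t)).toReal / t ^ d := rfl
    have htε : t < ε := by
      by_contra hge
      push_neg at hge
      have h1 : (ν (closedBall y t)).toReal ≤ νR :=
        ENNReal.toReal_mono (measure_ne_top ν univ) (measure_mono (subset_univ _))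
      have h2 : ε ^ d ≤ t ^ d := pow_le_pow_left₀ hεpos.le hge d
      have h3 : a k₀ ≤ νR / ε ^ d := by
        rw [hat]
        exact div_le_div₀ hνR0 h1 (by positivity) h2
      have hXτ : 0 < X * τ (1-r) := mul_pos hX0 hτδpos
      have h4 : B ≤ a k₀ := by linarith [hak₀B]
      rw [hB] at h4
      linarith
    have htlt1 : t < 1 := by linarith
    have h10ta : 10 * t < a₀' := by
      have : 10 * ε ≤ a₀' := by linarith
      linarith
    have h10t1 : 10 * t < 1 := by linarith
    have hφb := (hsmall (10*t) (by linarith) h10ta).2.1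
    have hτ1 : τ (10*t) ≤ τ t :=
      hτanti ⟨htpos, htlt1⟩ ⟨by linarith, h10t1⟩ (by linarith)
    have hτ2 : τ t ≤ τ (1-r) :=
      hτanti ⟨hδpos, by linarith⟩ ⟨htpos, htlt1⟩ hδt
    have hcφ : c * φ (10*t) ≤ X * τ (1-r) * t ^ d := by
      calc c * φ (10*t) ≤ c * (C' * (τ (10*t) * (10*t)^d)) :=
            mul_le_mul_of_nonneg_left hφb hc.le
        _ = (c * C' * 10^d) * τ (10*t) * t^d := by rw [mul_pow]; ring
        _ = X * τ (10*t) * t^d := by rw [hX]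
        _ ≤ X * τ (1-r) * t^d := by
            refine mul_le_mul_of_nonneg_right ?_ (by positivity)
            exact mul_le_mul_of_nonneg_left (le_trans hτ1 hτ2) hX0.le
    have htR : (ν (closedBall y t)).toReal = a k₀ * t ^ d := by
      rw [hat, div_mul_cancel₀ _ (by positivity : (t:ℝ)^d ≠ 0)]
    have hνpos : 0 < (ν (closedBall y t)).toReal := by
      rw [htR]
      have hXτ : 0 < X * τ (1-r) := mul_pos hX0 hτδpos
      have hak : 0 < a k₀ := by linarith [hak₀B]
      positivity
    refine ⟨t, htpos, lt_of_lt_of_le htε hεε₀, ?_⟩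
    rw [← ENNReal.ofReal_toReal (measure_ne_top ν (closedBall y t)),
      ENNReal.ofReal_lt_ofReal_iff hνpos]
    refine lt_of_le_of_lt hcφ ?_
    rw [htR]
    have hlt : X * τ (1-r) < a k₀ := by linarith [hak₀B, hB1]
    exact mul_lt_mul_of_pos_right hlt (pow_pos htpos d)
end

section
/- For every β ∈ [0,d] and every finite complex Borel measure μ on S^d, the set E(β,μ) = {y ∈ S^d : limsup_{r→1} |P[μ](ry)|·(1-r)^β = +∞} has Hausdorff dimension at most d - β. -/
open Metric Set MeasureTheory Filter
open scoped ENNReal NNReal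

section Frostman

variable {X : Type*} [MetricSpace X] [MeasurableSpace X] [BorelSpace X]

lemma ediam_closedBall_le (x : X) {ρ : ℝ} (h : 0 ≤ ρ) :
    EMetric.diam (closedBall x ρ) ≤ ENNReal.ofReal (2 * ρ) := by
  refine EMetric.diam_le fun a ha b hb => ?_
  rw [edist_dist]
  refine ENNReal.ofReal_le_ofReal ?_
  have ha' := mem_closedBall.mp ha
  have hb' := mem_closedBall.mp hb
  calc dist a b ≤ dist a x + dist x b := dist_triangle _ _ _
    _ ≤ ρ + ρ := by rw [dist_comm x b]; exact add_le_add ha' hb'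
    _ = 2 * ρ := by ring

lemma frostman_hausdorff_zero (ν : Measure X) [IsFiniteMeasure ν] {s : ℝ} (hs : 0 ≤ s)
    {A : Set X}
    (hA : ∀ y ∈ A, ∀ C : ℝ, 0 < C → ∀ ε : ℝ, 0 < ε →
      ∃ t : ℝ, 0 < t ∧ t ≤ ε ∧ ENNReal.ofReal (C * t ^ s) < ν (closedBall y t)) :
    μH[s] A = 0 := by
  have main : ∀ n : ℕ, ∃ u : Set (X × ℝ),
      (∀ p ∈ u, p.1 ∈ A ∧ 0 < p.2 ∧ p.2 ≤ 1/((n:ℝ)+1) ∧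
        ENNReal.ofReal (((n:ℝ)+1) * p.2 ^ s) < ν (closedBall p.1 p.2)) ∧
      (u.PairwiseDisjoint fun p => closedBall p.1 p.2) ∧
      (A ⊆ ⋃ p ∈ u, closedBall p.1 (5 * p.2)) := by
    intro n
    set T : Set (X × ℝ) := {p | p.1 ∈ A ∧ 0 < p.2 ∧ p.2 ≤ 1/((n:ℝ)+1) ∧
      ENNReal.ofReal (((n:ℝ)+1) * p.2 ^ s) < ν (closedBall p.1 p.2)} with hT
    obtain ⟨u, huT, hdisj, hcov⟩ :=
      Vitali.exists_disjoint_subfamily_covering_enlargement_closedBall T Prod.fst Prod.snd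
        (1/((n:ℝ)+1)) (fun p hp => hp.2.2.1) 5 (by norm_num)
    refine ⟨u, fun p hp => huT hp, hdisj, fun y hy => ?_⟩
    obtain ⟨t, ht0, htε, htν⟩ := hA y hy ((n:ℝ)+1) (by positivity) (1/((n:ℝ)+1)) (by positivity)
    obtain ⟨b, hbu, hb⟩ := hcov (y, t) ⟨hy, ht0, htε, htν⟩
    exact mem_biUnion hbu (hb (mem_closedBall_self ht0.le))
  choose u hu hdisj hcov using main
  have hcnt : ∀ n, (u n).Countable := by
    intro n
    have h1 : Set.Countable {i : ↥(u n) | 0 < ν (closedBall (i : X × ℝ).1 (i : X × ℝ).2)} :=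
      MeasureTheory.Measure.countable_meas_pos_of_disjoint_iUnion₀ (μ := ν)
        (fun i => measurableSet_closedBall.nullMeasurableSet)
        (fun i j hij => Disjoint.aedisjoint
          ((hdisj n) i.2 j.2 (fun h => hij (Subtype.ext h))))
    have h2 : {i : ↥(u n) | 0 < ν (closedBall (i : X × ℝ).1 (i : X × ℝ).2)} = univ :=
      eq_univ_of_forall fun i => lt_of_le_of_lt (zero_le) (hu n i i.2).2.2.2
    rw [h2] at h1
    exact Set.countable_coe_iff.mp (Set.countable_univ_iff.mp h1)
  haveI : ∀ n, Countable ↥(u n) := fun n => (hcnt n).to_subtype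
  have key := MeasureTheory.Measure.hausdorffMeasure_le_liminf_tsum (ι := fun n => ↥(u n)) s A
      (fun n => ENNReal.ofReal (10 * (1/((n:ℝ)+1))))
      (by
        have h1 : Tendsto (fun n : ℕ => 10 * (1/((n:ℝ)+1))) atTop (nhds 0) := by
          simpa using ((tendsto_one_div_add_atTop_nhds_zero_nat (𝕜 := ℝ)).const_mul 10)
        simpa using ENNReal.tendsto_ofReal h1)
      (fun n i => closedBall (i : X × ℝ).1 (5 * (i : X × ℝ).2))
      (by
        refine Eventually.of_forall fun n => fun i => ?_
        obtain ⟨-, ht0, htε, -⟩ := hu n i i.2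
        refine (ediam_closedBall_le _ (by positivity)).trans (ENNReal.ofReal_le_ofReal ?_)
        nlinarith)
      (by
        refine Eventually.of_forall fun n => ?_
        intro y hy
        obtain ⟨p, hp, hyp⟩ := mem_iUnion₂.mp (hcov n hy)
        exact mem_iUnion.mpr ⟨⟨p, hp⟩, hyp⟩)
  refine le_antisymm (key.trans ?_) (zero_le)
  have hterm : ∀ n : ℕ,
      (∑' i : ↥(u n), EMetric.diam (closedBall (i : X × ℝ).1 (5 * (i : X × ℝ).2)) ^ s)
      ≤ ENNReal.ofReal ((10:ℝ) ^ s / ((n:ℝ)+1)) * ν univ := by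
    intro n
    have hpt : ∀ i : ↥(u n),
        EMetric.diam (closedBall (i : X × ℝ).1 (5 * (i : X × ℝ).2)) ^ s
        ≤ ENNReal.ofReal ((10:ℝ) ^ s / ((n:ℝ)+1)) * ν (closedBall (i : X × ℝ).1 (i : X × ℝ).2) := by
      intro i
      obtain ⟨-, ht0, htε, htν⟩ := hu n i i.2
      set t : ℝ := (i : X × ℝ).2
      calc EMetric.diam (closedBall (i : X × ℝ).1 (5 * t)) ^ s
          ≤ (ENNReal.ofReal (2 * (5 * t))) ^ s :=
            ENNReal.rpow_le_rpow (ediam_closedBall_le _ (by positivity)) hs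
        _ = ENNReal.ofReal ((10 * t) ^ s) := by
            rw [show 2 * (5 * t) = 10 * t by ring, ENNReal.ofReal_rpow_of_pos (by positivity)]
        _ = ENNReal.ofReal (((10:ℝ) ^ s / ((n:ℝ)+1)) * (((n:ℝ)+1) * t ^ s)) := by
            congr 1
            rw [Real.mul_rpow (by norm_num) ht0.le]
            field_simp
        _ = ENNReal.ofReal ((10:ℝ) ^ s / ((n:ℝ)+1)) * ENNReal.ofReal (((n:ℝ)+1) * t ^ s) :=
            ENNReal.ofReal_mul (by positivity)
        _ ≤ _ := mul_le_mul_right htν.le _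
    calc (∑' i : ↥(u n), EMetric.diam (closedBall (i : X × ℝ).1 (5 * (i : X × ℝ).2)) ^ s)
        ≤ ∑' i : ↥(u n), ENNReal.ofReal ((10:ℝ) ^ s / ((n:ℝ)+1)) *
            ν (closedBall (i : X × ℝ).1 (i : X × ℝ).2) := ENNReal.tsum_le_tsum hpt
      _ = ENNReal.ofReal ((10:ℝ) ^ s / ((n:ℝ)+1)) *
            ∑' i : ↥(u n), ν (closedBall (i : X × ℝ).1 (i : X × ℝ).2) := ENNReal.tsum_mul_left
      _ = ENNReal.ofReal ((10:ℝ) ^ s / ((n:ℝ)+1)) *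
            ν (⋃ p ∈ u n, closedBall p.1 p.2) := by
          rw [measure_biUnion (hcnt n) (hdisj n) (fun _ _ => measurableSet_closedBall)]
      _ ≤ ENNReal.ofReal ((10:ℝ) ^ s / ((n:ℝ)+1)) * ν univ :=
          mul_le_mul_right (measure_mono (subset_univ _)) _
  refine le_trans (liminf_le_liminf (Eventually.of_forall hterm)) ?_
  have htend : Tendsto (fun n : ℕ => ENNReal.ofReal ((10:ℝ) ^ s / ((n:ℝ)+1)) * ν univ)
      atTop (nhds 0) := by
    have h1 : Tendsto (fun n : ℕ => (10:ℝ) ^ s / ((n:ℝ)+1)) atTop (nhds 0) := by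
      simpa [div_eq_mul_inv] using tendsto_one_div_add_atTop_nhds_zero_nat.const_mul ((10:ℝ) ^ s)
    have h2 : Tendsto (fun n : ℕ => ENNReal.ofReal ((10:ℝ) ^ s / ((n:ℝ)+1))) atTop (nhds 0) := by
      simpa using ENNReal.tendsto_ofReal h1
    simpa using ENNReal.Tendsto.mul_const h2 (Or.inr (measure_ne_top ν univ))
  rw [htend.liminf_eq]

end Frostman

lemma keyineq (dd k : ℕ) (β : ℝ) (hβ0 : 0 ≤ β) (hβd : β ≤ (dd:ℝ)) (C δ : ℝ)
    (hC : 0 ≤ C) (hδ : 0 < δ) :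
    2*3^(dd+1)*δ/(((2:ℝ)^k*δ)^(dd+1)) * (C * ((2:ℝ)^(k+1)*δ) ^ ((dd:ℝ)-β))
      ≤ (2*3^(dd+1) * (2:ℝ) ^ ((dd:ℝ)-β) * C * δ ^ (-β)) * (1/2)^k := by
  set s : ℝ := (dd:ℝ) - β with hsdef
  have hu1 : (1:ℝ) ≤ 2^k := one_le_pow₀ (by norm_num)
  have hu0 : (0:ℝ) < 2^k := by positivity
  have e1 : ((2:ℝ)^(k+1)*δ) ^ s = (2:ℝ)^s * ((2:ℝ)^k) ^ s * δ ^ s := by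
    rw [show (2:ℝ)^(k+1)*δ = 2 * ((2:ℝ)^k * δ) by ring,
      Real.mul_rpow (by norm_num) (by positivity),
      Real.mul_rpow (by positivity) hδ.le, mul_assoc]
  have e2 : ((2:ℝ)^k) ^ s ≤ (2:ℝ)^(k*dd) := by
    calc ((2:ℝ)^k) ^ s ≤ ((2:ℝ)^k) ^ ((dd:ℕ):ℝ) :=
          Real.rpow_le_rpow_of_exponent_le hu1 (by rw [hsdef]; push_cast; linarith)
      _ = ((2:ℝ)^k)^(dd:ℕ) := Real.rpow_natCast _ _
      _ = (2:ℝ)^(k*dd) := by rw [← pow_mul]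
  have e3 : δ ^ s = δ^(dd:ℕ) * δ ^ (-β) := by
    rw [← Real.rpow_natCast δ dd, ← Real.rpow_add hδ, hsdef, sub_eq_add_neg]
  have hrp2 : (0:ℝ) ≤ (2:ℝ) ^ s := (Real.rpow_pos_of_pos (by norm_num) s).le
  have hrpδ : (0:ℝ) ≤ δ ^ (-β) := (Real.rpow_pos_of_pos hδ (-β)).le
  calc 2*3^(dd+1)*δ/(((2:ℝ)^k*δ)^(dd+1)) * (C * ((2:ℝ)^(k+1)*δ) ^ s)
      = 2*3^(dd+1)*δ/((2:ℝ)^(k*(dd+1)) * δ^(dd+1)) *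
          (C * ((2:ℝ)^s * (((2:ℝ)^k) ^ s) * (δ^(dd:ℕ) * δ ^ (-β)))) := by
        rw [e1, e3, mul_pow, ← pow_mul]
    _ ≤ 2*3^(dd+1)*δ/((2:ℝ)^(k*(dd+1)) * δ^(dd+1)) *
          (C * ((2:ℝ)^s * ((2:ℝ)^(k*dd)) * (δ^(dd:ℕ) * δ ^ (-β)))) := by
        gcongr
    _ = (2*3^(dd+1) * (2:ℝ) ^ s * C * δ ^ (-β)) * (1/2)^k := by
        rw [show k*(dd+1) = k*dd + k by ring, pow_add, pow_succ δ dd, one_div_pow]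
        field_simp
        ring

lemma lintB {X : Type*} [MetricSpace X] [MeasurableSpace X] [BorelSpace X]
    (ν : Measure X) (dd : ℕ) (β : ℝ) (hβ0 : 0 ≤ β) (hβd : β ≤ (dd:ℝ))
    (y : X) (C : ℝ) (hC : 0 ≤ C) (δ : ℝ) (hδ : 0 < δ)
    (hfrost : ∀ t : ℝ, 0 < t → ν (closedBall y t) ≤ ENNReal.ofReal (C * t ^ ((dd:ℝ) - β)))
    (f : X → ℝ) (hf : ∀ ξ, f ξ ≤ 2*3^(dd+1)*δ / ((δ + dist y ξ)^(dd+1))) :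
    ∫⁻ ξ, ENNReal.ofReal (f ξ) ∂ν
      ≤ ENNReal.ofReal ((4*3^(dd+1) * (2:ℝ) ^ ((dd:ℝ)-β)) * C * δ ^ (-β)) := by
  set s : ℝ := (dd:ℝ) - β with hsdef
  set B : ℕ → Set X := fun k => ball y ((2^k - 1)*δ) with hB
  have hcover : (⋃ k, (B (k+1) \ B k)) = univ := by
    classical
    apply eq_univ_of_forall
    intro ξ
    have hex : ∃ n, ξ ∈ B n := by
      obtain ⟨n, hn⟩ := pow_unbounded_of_one_lt (dist ξ y / δ + 1) (one_lt_two (α := ℝ))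
      refine ⟨n, ?_⟩
      simp only [hB, mem_ball]
      have h' : dist ξ y / δ < 2 ^ n - 1 := by linarith
      have := (div_lt_iff₀ hδ).mp h'
      linarith [this]
    have h0 : Nat.find hex ≠ 0 := by
      intro h
      have := Nat.find_spec hex
      rw [h] at this
      simp [hB, mem_ball] at this
    obtain ⟨m, hm⟩ := Nat.exists_eq_succ_of_ne_zero h0
    refine mem_iUnion.mpr ⟨m, ⟨?_, ?_⟩⟩
    · have := Nat.find_spec hex; rwa [hm] at this
    · exact Nat.find_min hex (by omega)
  have termbound : ∀ k : ℕ, ∫⁻ ξ in B (k+1) \ B k, ENNReal.ofReal (f ξ) ∂ν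
      ≤ ENNReal.ofReal ((2*3^(dd+1) * (2:ℝ)^s * C * δ ^ (-β))) * ENNReal.ofReal ((1/2)^k) := by
    intro k
    have hfle : ∀ ξ ∈ B (k+1) \ B k,
        ENNReal.ofReal (f ξ) ≤ ENNReal.ofReal (2*3^(dd+1)*δ / (((2:ℝ)^k*δ)^(dd+1))) := by
      intro ξ hξ
      apply ENNReal.ofReal_le_ofReal
      refine (hf ξ).trans ?_
      have h1 : ((2:ℝ)^k - 1)*δ ≤ dist ξ y := by
        have := hξ.2
        simp only [hB, mem_ball, not_lt] at this
        exact this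
      have h2 : (2:ℝ)^k*δ ≤ δ + dist y ξ := by
        rw [dist_comm]
        calc (2:ℝ)^k*δ = ((2:ℝ)^k - 1)*δ + δ := by ring
          _ ≤ dist ξ y + δ := add_le_add_left h1 _
          _ = δ + dist ξ y := by ring
      gcongr
    have hstep := (setLIntegral_mono' (μ := ν) (measurableSet_ball.diff measurableSet_ball) hfle).trans_eq
      (setLIntegral_const _ _)
    have hmeas : ν (B (k+1) \ B k) ≤ ENNReal.ofReal (C * ((2:ℝ)^(k+1)*δ) ^ s) := by
      refine le_trans (measure_mono ?_) (hfrost ((2:ℝ)^(k+1)*δ) (by positivity))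
      refine (diff_subset).trans ?_
      refine (ball_subset_closedBall).trans (closedBall_subset_closedBall ?_)
      nlinarith [hδ.le]
    calc ∫⁻ ξ in B (k+1) \ B k, ENNReal.ofReal (f ξ) ∂ν
        ≤ ENNReal.ofReal (2*3^(dd+1)*δ / (((2:ℝ)^k*δ)^(dd+1))) * ν (B (k+1) \ B k) := hstep
      _ ≤ ENNReal.ofReal (2*3^(dd+1)*δ / (((2:ℝ)^k*δ)^(dd+1))) *
            ENNReal.ofReal (C * ((2:ℝ)^(k+1)*δ) ^ s) := mul_le_mul_right hmeas _
      _ = ENNReal.ofReal (2*3^(dd+1)*δ / (((2:ℝ)^k*δ)^(dd+1)) * (C * ((2:ℝ)^(k+1)*δ) ^ s)) :=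
          (ENNReal.ofReal_mul (by positivity)).symm
      _ ≤ ENNReal.ofReal ((2*3^(dd+1) * (2:ℝ)^s * C * δ ^ (-β)) * (1/2)^k) :=
          ENNReal.ofReal_le_ofReal (keyineq dd k β hβ0 hβd C δ hC hδ)
      _ = _ := ENNReal.ofReal_mul' (by positivity)
  calc ∫⁻ ξ, ENNReal.ofReal (f ξ) ∂ν
      = ∫⁻ ξ in ⋃ k, (B (k+1) \ B k), ENNReal.ofReal (f ξ) ∂ν := by
        rw [hcover, Measure.restrict_univ]
    _ ≤ ∑' k, ∫⁻ ξ in B (k+1) \ B k, ENNReal.ofReal (f ξ) ∂ν := lintegral_iUnion_le _ _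
    _ ≤ ∑' k : ℕ, ENNReal.ofReal ((2*3^(dd+1) * (2:ℝ)^s * C * δ ^ (-β))) *
          ENNReal.ofReal ((1/2)^k) := ENNReal.tsum_le_tsum termbound
    _ = ENNReal.ofReal ((2*3^(dd+1) * (2:ℝ)^s * C * δ ^ (-β))) *
          ∑' k : ℕ, ENNReal.ofReal ((1/2)^k) := ENNReal.tsum_mul_left
    _ ≤ _ := by
        have h12 : ∀ k : ℕ, ENNReal.ofReal ((1/2:ℝ)^k) = (2⁻¹ : ℝ≥0∞)^k := by
          intro k
          rw [ENNReal.ofReal_pow (by norm_num), one_div,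
            ENNReal.ofReal_inv_of_pos (by norm_num), ENNReal.ofReal_ofNat]
        simp_rw [h12]
        rw [ENNReal.tsum_geometric, ENNReal.one_sub_inv_two, inv_inv]
        rw [show ((4:ℝ)*3^(dd+1) * (2:ℝ) ^ s) * C * δ ^ (-β)
            = (2*3^(dd+1) * (2:ℝ)^s * C * δ ^ (-β)) * 2 from by ring,
          ENNReal.ofReal_mul' (by norm_num : (0:ℝ) ≤ (2:ℝ)), ENNReal.ofReal_ofNat]
lemma spherePoissonKernel_nonneg (d : ℕ) {y : EuclideanSpace ℝ (Fin (d + 1))}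
    (ξ : EuclideanSpace ℝ (Fin (d + 1))) (hy : ‖y‖ = 1) {r : ℝ} (hr0 : 0 ≤ r) (hr1 : r ≤ 1) :
    0 ≤ spherePoissonKernel d (r • y) ξ := by
  unfold spherePoissonKernel
  have hn : ‖r • y‖ = r := by rw [norm_smul, hy, Real.norm_eq_abs, abs_of_nonneg hr0, mul_one]
  rw [hn]
  have : r ^ 2 ≤ 1 := by nlinarith
  apply div_nonneg (by linarith) (by positivity)

lemma spherePoissonKernel_le (d : ℕ) {y ξ : EuclideanSpace ℝ (Fin (d + 1))}
    (hy : ‖y‖ = 1) (hξ : ‖ξ‖ = 1) {r : ℝ} (hr0 : 0 ≤ r) (hr1 : r < 1) :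
    spherePoissonKernel d (r • y) ξ ≤ 2*3^(d+1)*(1-r) / (((1-r) + ‖y - ξ‖)^(d+1)) := by
  have hn : ‖r • y‖ = r := by rw [norm_smul, hy, Real.norm_eq_abs, abs_of_nonneg hr0, mul_one]
  have h1 : 1 - r ≤ ‖r • y - ξ‖ := by
    have := norm_sub_norm_le ξ (r • y)
    rw [hξ, hn, norm_sub_rev] at this
    linarith
  have hpos : 0 < ‖r • y - ξ‖ := lt_of_lt_of_le (by linarith) h1
  have h2 : ‖y - ξ‖ ≤ (1-r) + ‖r • y - ξ‖ := by
    have ht : ‖y - ξ‖ ≤ ‖y - r • y‖ + ‖r • y - ξ‖ := norm_sub_le_norm_sub_add_norm_sub _ _ _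
    have hyr : ‖y - r • y‖ = 1 - r := by
      rw [show y - r • y = (1 - r) • y from by rw [sub_smul, one_smul],
        norm_smul, hy, Real.norm_eq_abs, abs_of_nonneg (by linarith), mul_one]
    linarith
  have h3 : (1-r) + ‖y - ξ‖ ≤ 3 * ‖r • y - ξ‖ := by linarith
  have hd2 : (0:ℝ) < ((1-r) + ‖y - ξ‖) := by
    have := norm_nonneg (y - ξ); linarith
  unfold spherePoissonKernel
  rw [hn]
  have hnum : 1 - r ^ 2 ≤ 2 * (1 - r) := by nlinarith
  have hden : ((1-r) + ‖y - ξ‖)^(d+1) ≤ 3^(d+1) * ‖r • y - ξ‖^(d+1) := by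
    calc ((1-r) + ‖y - ξ‖)^(d+1) ≤ (3 * ‖r • y - ξ‖)^(d+1) := by
          exact pow_le_pow_left₀ hd2.le h3 _
      _ = 3^(d+1) * ‖r • y - ξ‖^(d+1) := mul_pow _ _ _
  rw [div_le_div_iff₀ (by positivity) (by positivity)]
  have hb : (0:ℝ) < ‖r • y - ξ‖^(d+1) := by positivity
  have hr2 : 0 ≤ 1 - r ^ 2 := by nlinarith
  calc (1 - r ^ 2) * ((1-r) + ‖y - ξ‖)^(d+1)
      ≤ (2 * (1 - r)) * (3^(d+1) * ‖r • y - ξ‖^(d+1)) := by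
        apply mul_le_mul hnum hden (by positivity) (by linarith)
    _ = 2*3^(d+1)*(1-r) * ‖r • y - ξ‖^(d+1) := by ring
/-- A finite complex Borel measure `μ` on the sphere is encoded through its polar
decomposition `dμ = g d|μ|`, with `ν = |μ|` a finite positive measure and `‖g‖ ≡ 1`.
For `β ∈ [0,d]`, the set where `limsup_{r→1} |P[μ](ry)| (1-r)^β = ∞` has Hausdorff
dimension at most `d - β`. -/
theorem dimH_exceptional_le (d : ℕ) (β : ℝ) (hβ : β ∈ Icc (0 : ℝ) d)
    (ν : Measure (sphere (0 : EuclideanSpace ℝ (Fin (d + 1))) 1)) [IsFiniteMeasure ν]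
    (g : sphere (0 : EuclideanSpace ℝ (Fin (d + 1))) 1 → ℂ)
    (hgm : Measurable g) (hg : ∀ ξ, ‖g ξ‖ = 1) :
    dimH {y : sphere (0 : EuclideanSpace ℝ (Fin (d + 1))) 1 |
        ∀ M : ℝ, ∃ᶠ r in nhdsWithin (1 : ℝ) (Iio 1),
          M < ‖∫ ξ, (spherePoissonKernel d (r • (y : EuclideanSpace ℝ (Fin (d + 1)))) ξ : ℂ) * g ξ ∂ν‖
                * Real.rpow (1 - r) β}
      ≤ ENNReal.ofReal (d - β) := by
  obtain ⟨hβ0, hβd⟩ := hβ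
  have hs : (0:ℝ) ≤ (d:ℝ) - β := by linarith
  have hzero : μH[(d:ℝ) - β] {y : sphere (0 : EuclideanSpace ℝ (Fin (d + 1))) 1 |
      ∀ M : ℝ, ∃ᶠ r in nhdsWithin (1 : ℝ) (Iio 1),
        M < ‖∫ ξ, (spherePoissonKernel d (r • (y : EuclideanSpace ℝ (Fin (d + 1)))) ξ : ℂ) * g ξ ∂ν‖
              * Real.rpow (1 - r) β} = 0 := by
    refine frostman_hausdorff_zero ν hs ?_
    intro y hy C hC ε hε
    by_contra hcon
    push_neg at hcon
    set C' : ℝ := C + (ν univ).toReal / ε ^ ((d:ℝ)-β) with hC'def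
    have hεs : (0:ℝ) < ε ^ ((d:ℝ)-β) := Real.rpow_pos_of_pos hε _
    have hC'0 : 0 < C' := by positivity
    have hfull : ∀ t : ℝ, 0 < t →
        ν (closedBall y t) ≤ ENNReal.ofReal (C' * t ^ ((d:ℝ)-β)) := by
      intro t ht
      have hts : (0:ℝ) < t ^ ((d:ℝ)-β) := Real.rpow_pos_of_pos ht _
      rcases le_or_gt t ε with h | h
      · refine (hcon t ht h).trans (ENNReal.ofReal_le_ofReal ?_)
        have h4 : 0 ≤ (ν univ).toReal / ε ^ ((d:ℝ)-β) := by positivity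
        rw [hC'def]
        nlinarith
      · have h1 : ν (closedBall y t) ≤ ν univ := measure_mono (subset_univ _)
        refine h1.trans ?_
        rw [← ENNReal.ofReal_toReal (measure_ne_top ν univ)]
        refine ENNReal.ofReal_le_ofReal ?_
        have h2 : ε ^ ((d:ℝ)-β) ≤ t ^ ((d:ℝ)-β) := Real.rpow_le_rpow hε.le h.le hs
        have h4 : 0 ≤ (ν univ).toReal / ε ^ ((d:ℝ)-β) := by positivity
        have h5 : (ν univ).toReal / ε ^ ((d:ℝ)-β) * ε ^ ((d:ℝ)-β) = (ν univ).toReal := by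
          field_simp
        have h6 := mul_le_mul_of_nonneg_left h2 h4
        rw [hC'def]
        nlinarith
    set K : ℝ := 4*3^(d+1) * (2:ℝ) ^ ((d:ℝ)-β) with hKdef
    have hK0 : 0 < K := by positivity
    obtain ⟨r, hlt, hr⟩ := ((hy (K * C')).and_eventually
      (Ioo_mem_nhdsLT_of_mem (⟨zero_lt_one, le_rfl⟩ : (1:ℝ) ∈ Ioc 0 1))).exists
    have hr0 : 0 < r := hr.1
    have hr1 : r < 1 := hr.2
    have hδ : 0 < 1 - r := by linarith
    simp only [Real.rpow_eq_pow] at hlt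
    have hker : ∀ ξ : sphere (0 : EuclideanSpace ℝ (Fin (d+1))) 1,
        ‖(spherePoissonKernel d (r • (y : EuclideanSpace ℝ (Fin (d+1)))) ξ : ℂ) * g ξ‖
          ≤ 2*3^(d+1)*(1-r) / (((1-r) + dist y ξ)^(d+1)) := by
      intro ξ
      have hy1 : ‖(y : EuclideanSpace ℝ (Fin (d+1)))‖ = 1 := mem_sphere_zero_iff_norm.mp y.2
      have hξ1 : ‖(ξ : EuclideanSpace ℝ (Fin (d+1)))‖ = 1 := mem_sphere_zero_iff_norm.mp ξ.2
      rw [norm_mul, hg ξ, mul_one, Complex.norm_real, Real.norm_eq_abs,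
        abs_of_nonneg (spherePoissonKernel_nonneg d _ hy1 hr0.le hr1.le)]
      have hdist : dist y ξ
          = ‖(y : EuclideanSpace ℝ (Fin (d+1))) - (ξ : EuclideanSpace ℝ (Fin (d+1)))‖ := by
        rw [Subtype.dist_eq, dist_eq_norm]
      rw [hdist]
      exact spherePoissonKernel_le d hy1 hξ1 hr0.le hr1
    have hnorm : ‖∫ ξ, (spherePoissonKernel d (r • (y : EuclideanSpace ℝ (Fin (d+1)))) ξ : ℂ)
        * g ξ ∂ν‖ ≤ K * C' * (1-r) ^ (-β) := by
      refine (norm_integral_le_lintegral_norm _).trans ?_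
      refine ENNReal.toReal_le_of_le_ofReal (by positivity) ?_
      rw [hKdef]
      exact lintB ν d β hβ0 hβd y C' hC'0.le (1-r) hδ hfull _ hker
    have hrp : (0:ℝ) ≤ (1-r) ^ β := Real.rpow_nonneg hδ.le β
    have hfinal : ‖∫ ξ, (spherePoissonKernel d (r • (y : EuclideanSpace ℝ (Fin (d+1)))) ξ : ℂ)
        * g ξ ∂ν‖ * (1-r) ^ β ≤ K * C' := by
      calc ‖∫ ξ, (spherePoissonKernel d (r • (y : EuclideanSpace ℝ (Fin (d+1)))) ξ : ℂ)
            * g ξ ∂ν‖ * (1-r) ^ β ≤ (K * C' * (1-r) ^ (-β)) * (1-r) ^ β :=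
            mul_le_mul_of_nonneg_right hnorm hrp
        _ = K * C' := by
            rw [mul_assoc, ← Real.rpow_add hδ]
            norm_num
    exact absurd hlt (not_lt.mpr hfinal)
  have hd : dimH {y : sphere (0 : EuclideanSpace ℝ (Fin (d + 1))) 1 |
      ∀ M : ℝ, ∃ᶠ r in nhdsWithin (1 : ℝ) (Iio 1),
        M < ‖∫ ξ, (spherePoissonKernel d (r • (y : EuclideanSpace ℝ (Fin (d + 1)))) ξ : ℂ) * g ξ ∂ν‖
              * Real.rpow (1 - r) β} ≤ ((((d:ℝ) - β).toNNReal : ℝ≥0) : ℝ≥0∞) := by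
    refine dimH_le_of_hausdorffMeasure_ne_top ?_
    rw [Real.coe_toNNReal _ hs, hzero]
    exact ENNReal.zero_ne_top
  exact hd.trans le_rfl
end

section
/- For every β ∈ [0,d] and every f ∈ L¹(S^d), the set E(β,f) = {y ∈ S^d : limsup_{r→1} |P[f](ry)|·(1-r)^β = +∞} has Hausdorff dimension at most d - β. -/
open Metric Set MeasureTheory Filter

open scoped ENNReal

lemma vitali_density_step {X : Type*} [MetricSpace X] [MeasurableSpace X] [BorelSpace X]
    (ν : Measure X) [IsFiniteMeasure ν] (s : ℝ) (D : Set X) (ε : ℝ)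
    (hD : ∀ y ∈ D, ∃ δ : ℝ, 0 < δ ∧ δ < ε ∧ ENNReal.ofReal (δ ^ s) < ν (closedBall y δ)) :
    ∃ u : Set (X × ℝ), u.Countable ∧
      (∀ p ∈ u, 0 < p.2 ∧ p.2 < ε ∧ ENNReal.ofReal (p.2 ^ s) < ν (closedBall p.1 p.2)) ∧
      (D ⊆ ⋃ p ∈ u, closedBall p.1 (4 * p.2)) ∧
      (u.PairwiseDisjoint fun p => closedBall p.1 p.2) := by
  set t : Set (X × ℝ) :=
    {p | 0 < p.2 ∧ p.2 < ε ∧ ENNReal.ofReal (p.2 ^ s) < ν (closedBall p.1 p.2)} with ht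
  obtain ⟨u, hut, hdisj, hcov⟩ :=
    Vitali.exists_disjoint_subfamily_covering_enlargement_closedBall t Prod.fst Prod.snd ε
      (fun p hp => hp.2.1.le) 4 (by norm_num)
  refine ⟨u, ?_, fun p hp => hut hp, ?_, hdisj⟩
  · have hd : Pairwise (Function.onFun Disjoint fun i : u => closedBall (i : X × ℝ).1 (i : X × ℝ).2) :=
      fun i j hij => hdisj i.2 j.2 (fun h => hij (Subtype.ext h))
    have hcnt := MeasureTheory.Measure.countable_meas_pos_of_disjoint_iUnion
      (μ := ν) (fun i : u => measurableSet_closedBall) hd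
    have huniv : {i : u | 0 < ν (closedBall (i : X × ℝ).1 (i : X × ℝ).2)} = Set.univ :=
      Set.eq_univ_of_forall fun i => lt_of_le_of_lt zero_le (hut i.2).2.2
    rw [huniv, Set.countable_univ_iff] at hcnt
    exact Set.countable_coe_iff.mp hcnt
  · intro y hy
    obtain ⟨δ, hδ0, hδε, hδν⟩ := hD y hy
    obtain ⟨b, hb, hsub⟩ := hcov (y, δ) ⟨hδ0, hδε, hδν⟩
    exact Set.mem_biUnion hb (hsub (mem_closedBall_self hδ0.le))

lemma dimH_density_le {X : Type*} [MetricSpace X] [MeasurableSpace X] [BorelSpace X]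
    (ν : Measure X) [IsFiniteMeasure ν] (s : ℝ) (hs : 0 ≤ s) (D : Set X)
    (hD : ∀ y ∈ D, ∀ ε : ℝ, 0 < ε → ∃ δ : ℝ, 0 < δ ∧ δ < ε ∧
      ENNReal.ofReal (δ ^ s) < ν (closedBall y δ)) :
    dimH D ≤ ENNReal.ofReal s := by
  have key : ∀ n : ℕ, ∃ u : Set (X × ℝ), u.Countable ∧
      (∀ p ∈ u, 0 < p.2 ∧ p.2 < 1/(n+1) ∧ ENNReal.ofReal (p.2 ^ s) < ν (closedBall p.1 p.2)) ∧
      (D ⊆ ⋃ p ∈ u, closedBall p.1 (4 * p.2)) ∧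
      (u.PairwiseDisjoint fun p => closedBall p.1 p.2) := fun n =>
    vitali_density_step ν s D (1/(n+1)) (fun y hy => hD y hy _ (by positivity))
  choose u hcnt hmem hcov hdisj using key
  haveI : ∀ n, Countable ↥(u n) := fun n => (hcnt n).to_subtype
  have hH : μH[s] D ≤ ENNReal.ofReal (8 ^ s) * ν Set.univ := by
    have hdiam : ∀ (n : ℕ) (i : ↥(u n)),
        EMetric.diam (closedBall (i : X × ℝ).1 (4 * (i : X × ℝ).2))
          ≤ ENNReal.ofReal (8 * (i : X × ℝ).2) := by
      intro n i
      have h2 : (0:ℝ) ≤ 4 * (i : X × ℝ).2 := by have := (hmem n _ i.2).1; positivity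
      calc EMetric.diam (closedBall (i : X × ℝ).1 (4 * (i : X × ℝ).2))
          ≤ EMetric.diam (EMetric.closedBall (i : X × ℝ).1 (ENNReal.ofReal (4 * (i : X × ℝ).2))) :=
            EMetric.diam_mono (Metric.emetric_closedBall h2).ge
        _ ≤ 2 * ENNReal.ofReal (4 * (i : X × ℝ).2) := EMetric.diam_closedBall
        _ = ENNReal.ofReal (8 * (i : X × ℝ).2) := by
            rw [show (8:ℝ) * (i : X × ℝ).2 = 2 * (4 * (i : X × ℝ).2) by ring,
              ENNReal.ofReal_mul (by norm_num : (0:ℝ) ≤ 2),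
              ENNReal.ofReal_mul (by norm_num : (0:ℝ) ≤ 4),
              ENNReal.ofReal_ofNat, ENNReal.ofReal_ofNat]
    have hmain := MeasureTheory.Measure.hausdorffMeasure_le_liminf_tsum
      (ι := fun n : ℕ => ↥(u n)) s D (l := Filter.atTop)
      (fun n => ENNReal.ofReal (8 / (n+1)))
      (by
        have h0 : Filter.Tendsto (fun n : ℕ => 8 / ((n:ℝ)+1)) Filter.atTop (nhds 0) := by
          simpa [div_eq_mul_inv] using ((tendsto_one_div_add_atTop_nhds_zero_nat (𝕜 := ℝ)).const_mul 8)
        have := (ENNReal.tendsto_ofReal h0)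
        simpa using this)
      (fun n i => closedBall (i : X × ℝ).1 (4 * (i : X × ℝ).2))
      (Filter.Eventually.of_forall fun n i => by
        refine (hdiam n i).trans (ENNReal.ofReal_le_ofReal ?_)
        have := (hmem n _ i.2).2.1
        have h1 := (hmem n _ i.2).1
        rw [div_eq_mul_inv, ← one_div]
        nlinarith)
      (Filter.Eventually.of_forall fun n => by
        refine (hcov n).trans ?_
        rw [Set.biUnion_eq_iUnion])
    refine hmain.trans ?_
    refine Filter.liminf_le_of_frequently_le'
      (Filter.Eventually.frequently (Filter.Eventually.of_forall fun n => ?_))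
    calc ∑' i : ↥(u n), EMetric.diam (closedBall (i : X × ℝ).1 (4 * (i : X × ℝ).2)) ^ s
        ≤ ∑' i : ↥(u n), ENNReal.ofReal (8 ^ s) * ν (closedBall (i : X × ℝ).1 (i : X × ℝ).2) := by
          refine ENNReal.tsum_le_tsum fun i => ?_
          obtain ⟨h1, h2, h3⟩ := hmem n _ i.2
          calc EMetric.diam (closedBall (i : X × ℝ).1 (4 * (i : X × ℝ).2)) ^ s
              ≤ ENNReal.ofReal (8 * (i : X × ℝ).2) ^ s := ENNReal.rpow_le_rpow (hdiam n i) hs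
            _ = ENNReal.ofReal ((8 * (i : X × ℝ).2) ^ s) :=
                ENNReal.ofReal_rpow_of_pos (by positivity)
            _ = ENNReal.ofReal (8 ^ s * (i : X × ℝ).2 ^ s) := by
                rw [Real.mul_rpow (by norm_num) h1.le]
            _ = ENNReal.ofReal (8 ^ s) * ENNReal.ofReal ((i : X × ℝ).2 ^ s) :=
                ENNReal.ofReal_mul (by positivity)
            _ ≤ ENNReal.ofReal (8 ^ s) * ν (closedBall (i : X × ℝ).1 (i : X × ℝ).2) :=
                mul_le_mul_right h3.le _
      _ = ENNReal.ofReal (8 ^ s) *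
            ∑' i : ↥(u n), ν (closedBall (i : X × ℝ).1 (i : X × ℝ).2) := ENNReal.tsum_mul_left
      _ ≤ ENNReal.ofReal (8 ^ s) * ν Set.univ := by
          refine mul_le_mul_right ?_ _
          have hmeq := measure_iUnion (μ := ν)
            (f := fun i : ↥(u n) => closedBall ((i : X × ℝ)).1 ((i : X × ℝ)).2)
            (fun i j hij => hdisj n i.property j.property (fun h => hij (Subtype.ext h)))
            (fun i => measurableSet_closedBall)
          rw [← hmeq]
          exact measure_mono (Set.subset_univ _)
  have hne : μH[s] D ≠ ⊤ :=
    ne_top_of_le_ne_top (ENNReal.mul_ne_top ENNReal.ofReal_ne_top (measure_ne_top ν _)) hH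
  have : dimH D ≤ (s.toNNReal : ℝ≥0∞) := by
    refine dimH_le_of_hausdorffMeasure_ne_top ?_
    rwa [Real.coe_toNNReal s hs]
  exact this



lemma sphere_norm_smul_sub (d : ℕ) (y ξ : sphere (0 : EuclideanSpace ℝ (Fin (d + 1))) 1)
    {r : ℝ} (hr0 : 0 ≤ r) :
    ‖r • (y : EuclideanSpace ℝ (Fin (d + 1))) - (ξ : EuclideanSpace ℝ (Fin (d + 1)))‖ ^ 2
      = (1 - r) ^ 2 + r * dist (y : EuclideanSpace ℝ (Fin (d + 1)))
          (ξ : EuclideanSpace ℝ (Fin (d + 1))) ^ 2 := by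
  set E := EuclideanSpace ℝ (Fin (d + 1))
  have hY : ‖(y : E)‖ = 1 := mem_sphere_zero_iff_norm.mp y.2
  have hΞ : ‖(ξ : E)‖ = 1 := mem_sphere_zero_iff_norm.mp ξ.2
  have h1 := norm_sub_sq_real (r • (y : E)) (ξ : E)
  have h2 := norm_sub_sq_real (y : E) (ξ : E)
  have h3 : inner ℝ (r • (y : E)) (ξ : E) = r * inner ℝ (y : E) (ξ : E) :=
    real_inner_smul_left _ _ _
  have h4 : ‖r • (y : E)‖ = r := by
    rw [norm_smul, Real.norm_eq_abs, abs_of_nonneg hr0, hY, mul_one]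
  rw [dist_eq_norm, h1, h2, h3, h4, hY, hΞ]
  ring

set_option maxHeartbeats 1000000 in
lemma poisson_lintegral_bound (d : ℕ) (β : ℝ) (hβ0 : 0 ≤ β) (hβd : β ≤ d)
    (y : sphere (0 : EuclideanSpace ℝ (Fin (d + 1))) 1)
    (ν : Measure (sphere (0 : EuclideanSpace ℝ (Fin (d + 1))) 1))
    (C : ℝ) (hC0 : 0 ≤ C)
    (hC : ∀ δ : ℝ, 0 < δ → ν (closedBall y δ) ≤ ENNReal.ofReal (C * δ ^ ((d : ℝ) - β)))
    (r : ℝ) (hr1 : 1/2 ≤ r) (hr2 : r < 1) :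
    ∫⁻ ξ, ENNReal.ofReal
        (poissonKernelBall d (r • (y : EuclideanSpace ℝ (Fin (d + 1)))) ξ) ∂ν
      ≤ ENNReal.ofReal (C * 2 ^ (2 * d + 6) * (1 - r) ^ (-β)) := by
  set E := EuclideanSpace ℝ (Fin (d + 1))
  set δ := 1 - r with hδdef
  have hδ : 0 < δ := by simp only [hδdef]; linarith
  have hδne : δ ≠ 0 := hδ.ne'
  have hr0 : (0:ℝ) ≤ r := by linarith
  have hnorm : ∀ ξ : sphere (0 : E) 1,
      ‖r • (y : E) - (ξ : E)‖ ^ 2 = δ ^ 2 + r * dist (y : E) (ξ : E) ^ 2 :=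
    fun ξ => sphere_norm_smul_sub d y ξ hr0
  have fact1 : ∀ ξ : sphere (0 : E) 1, δ ≤ ‖r • (y : E) - (ξ : E)‖ := by
    intro ξ
    nlinarith [hnorm ξ, norm_nonneg (r • (y : E) - (ξ : E)),
      dist_nonneg (x := (y : E)) (y := (ξ : E)), sq_nonneg (dist (y : E) (ξ : E))]
  have fact2 : ∀ ξ : sphere (0 : E) 1, dist (y : E) (ξ : E) / 2 ≤ ‖r • (y : E) - (ξ : E)‖ := by
    intro ξ
    nlinarith [hnorm ξ, norm_nonneg (r • (y : E) - (ξ : E)),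
      dist_nonneg (x := (y : E)) (y := (ξ : E)), sq_nonneg (dist (y : E) (ξ : E))]
  -- kernel pointwise bound
  have hker : ∀ (ξ : sphere (0 : E) 1) (m : ℝ), 0 < m → m ≤ ‖r • (y : E) - (ξ : E)‖ →
      poissonKernelBall d (r • (y : E)) (ξ : E) ≤ 2 * δ / m ^ (d + 1) := by
    intro ξ m hm hmle
    have h4 : ‖r • (y : E)‖ = r := by
      rw [norm_smul, Real.norm_eq_abs, abs_of_nonneg hr0,
        mem_sphere_zero_iff_norm.mp y.2, mul_one]
    have hnum : 1 - ‖r • (y : E)‖ ^ 2 ≤ 2 * δ := by rw [h4]; simp only [hδdef]; nlinarith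
    unfold poissonKernelBall
    exact div_le_div₀ (by positivity) hnum (pow_pos hm _)
      (pow_le_pow_left₀ hm.le hmle _)
  -- exponent splitting helper
  have hsplit' : ∀ x : ℝ, 0 < x → x ^ ((d : ℝ) - β) = x ^ (d + 1) * x ^ (-β) * x⁻¹ := by
    intro x hx
    rw [← Real.rpow_natCast x (d + 1), ← Real.rpow_neg_one x, ← Real.rpow_add hx,
      ← Real.rpow_add hx]
    congr 1
    push_cast
    ring
  -- annuli
  set A : ℕ → Set (sphere (0 : E) 1) := fun k =>
    Nat.casesOn k (closedBall y δ)
      (fun j => closedBall y (2 ^ (j + 1) * δ) \ closedBall y (2 ^ j * δ)) with hA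
  have hAuniv : (Set.univ : Set (sphere (0 : E) 1)) = ⋃ k, A k := by
    refine (Set.eq_univ_of_univ_subset ?_).symm
    intro ξ _
    obtain ⟨k, hk⟩ : ∃ k : ℕ, dist ξ y ≤ 2 ^ k * δ := by
      obtain ⟨k, hk⟩ := pow_unbounded_of_one_lt (dist ξ y / δ) (one_lt_two (α := ℝ))
      rw [div_lt_iff₀ hδ] at hk
      exact ⟨k, by linarith⟩
    have main : ∀ k : ℕ, dist ξ y ≤ 2 ^ k * δ → ξ ∈ ⋃ k, A k := by
      intro k
      induction k with
      | zero =>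
        intro h
        refine Set.mem_iUnion.mpr ⟨0, ?_⟩
        show ξ ∈ closedBall y δ
        exact mem_closedBall.mpr (by simpa using h)
      | succ j ih =>
        intro h
        by_cases h' : dist ξ y ≤ 2 ^ j * δ
        · exact ih h'
        · refine Set.mem_iUnion.mpr ⟨j + 1, ?_⟩
          show ξ ∈ closedBall y (2 ^ (j + 1) * δ) \ closedBall y (2 ^ j * δ)
          exact ⟨mem_closedBall.mpr h, fun hc => h' (mem_closedBall.mp hc)⟩
    exact main k hk
  -- split the integral over the annuli
  have hsplit : ∫⁻ ξ, ENNReal.ofReal (poissonKernelBall d (r • (y : E)) ξ) ∂ν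
      ≤ ∑' k, ∫⁻ ξ in A k, ENNReal.ofReal (poissonKernelBall d (r • (y : E)) ξ) ∂ν := by
    rw [← setLIntegral_univ, hAuniv]
    exact lintegral_iUnion_le _ _
  -- bound for the central ball
  have hterm0 : ∫⁻ ξ in A 0, ENNReal.ofReal (poissonKernelBall d (r • (y : E)) ξ) ∂ν
      ≤ ENNReal.ofReal (2 * C * δ ^ (-β)) := by
    have hexp0 : 2 * δ / δ ^ (d + 1) * (C * δ ^ ((d : ℝ) - β)) = 2 * C * δ ^ (-β) := by
      rw [hsplit' δ hδ]
      field_simp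
    calc ∫⁻ ξ in A 0, ENNReal.ofReal (poissonKernelBall d (r • (y : E)) ξ) ∂ν
        ≤ ∫⁻ _ in A 0, ENNReal.ofReal (2 * δ / δ ^ (d + 1)) ∂ν :=
          setLIntegral_mono measurable_const (fun ξ _ =>
            ENNReal.ofReal_le_ofReal (hker ξ δ hδ (fact1 ξ)))
      _ = ENNReal.ofReal (2 * δ / δ ^ (d + 1)) * ν (A 0) := setLIntegral_const _ _
      _ ≤ ENNReal.ofReal (2 * δ / δ ^ (d + 1)) * ENNReal.ofReal (C * δ ^ ((d : ℝ) - β)) :=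
          mul_le_mul_right (hC δ hδ) _
      _ = ENNReal.ofReal (2 * δ / δ ^ (d + 1) * (C * δ ^ ((d : ℝ) - β))) :=
          (ENNReal.ofReal_mul (by positivity)).symm
      _ = ENNReal.ofReal (2 * C * δ ^ (-β)) := by rw [hexp0]
  -- bound for the annuli
  have htermS : ∀ k : ℕ,
      ∫⁻ ξ in A (k + 1), ENNReal.ofReal (poissonKernelBall d (r • (y : E)) ξ) ∂ν
        ≤ ENNReal.ofReal (2 * 4 ^ (d + 1) * C * δ ^ (-β)) * (2⁻¹ : ℝ≥0∞) ^ (k + 1) := by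
    intro k
    set ρ : ℝ := 2 ^ (k + 1) * δ with hρdef
    have hρ : 0 < ρ := by positivity
    have h2k : (1:ℝ) ≤ 2 ^ (k + 1) := by
      simpa using pow_le_pow_right₀ (one_le_two (α := ℝ)) (Nat.zero_le (k + 1))
    have hδρ : δ ≤ ρ := by
      rw [hρdef]
      nlinarith
    have hmem : ∀ ξ : sphere (0 : E) 1, ξ ∈ A (k + 1) → ρ / 4 ≤ ‖r • (y : E) - (ξ : E)‖ := by
      intro ξ hξ
      have h1 : ¬ dist ξ y ≤ 2 ^ k * δ := fun hc => hξ.2 (mem_closedBall.mpr hc)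
      push_neg at h1
      have h2 : dist (y : E) (ξ : E) = dist ξ y := by
        rw [Subtype.dist_eq]; exact dist_comm _ _
      refine le_trans ?_ (fact2 ξ)
      rw [h2]
      calc ρ / 4 = 2 ^ k * δ / 2 := by rw [hρdef, pow_succ]; ring
        _ ≤ dist ξ y / 2 := by gcongr
    have hsubball : A (k + 1) ⊆ closedBall y ρ := fun ξ hξ => hξ.1
    have key : 2 * δ / (ρ / 4) ^ (d + 1) * (C * ρ ^ ((d : ℝ) - β))
        ≤ 2 * 4 ^ (d + 1) * C * δ ^ (-β) * (1/2 : ℝ) ^ (k + 1) := by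
      have e1 : 2 * δ / (ρ / 4) ^ (d + 1) * (C * ρ ^ ((d : ℝ) - β))
          = (2 * 4 ^ (d + 1) * C * (1/2 : ℝ) ^ (k + 1)) * ρ ^ (-β) := by
        rw [hsplit' ρ hρ, div_pow, hρdef]
        have h2k : ((2:ℝ) ^ (k+1)) ≠ 0 := by positivity
        field_simp
        ring_nf
        rw [mul_assoc, ← mul_pow]; norm_num
      have e2 : ρ ^ (-β) ≤ δ ^ (-β) :=
        Real.rpow_le_rpow_of_nonpos hδ hδρ (by linarith)
      calc 2 * δ / (ρ / 4) ^ (d + 1) * (C * ρ ^ ((d : ℝ) - β))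
          = (2 * 4 ^ (d + 1) * C * (1/2 : ℝ) ^ (k + 1)) * ρ ^ (-β) := e1
        _ ≤ (2 * 4 ^ (d + 1) * C * (1/2 : ℝ) ^ (k + 1)) * δ ^ (-β) :=
            mul_le_mul_of_nonneg_left e2 (by positivity)
        _ = 2 * 4 ^ (d + 1) * C * δ ^ (-β) * (1/2 : ℝ) ^ (k + 1) := by ring
    calc ∫⁻ ξ in A (k + 1), ENNReal.ofReal (poissonKernelBall d (r • (y : E)) ξ) ∂ν
        ≤ ∫⁻ _ in A (k + 1), ENNReal.ofReal (2 * δ / (ρ / 4) ^ (d + 1)) ∂ν :=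
          setLIntegral_mono measurable_const (fun ξ hξ =>
            ENNReal.ofReal_le_ofReal (hker ξ (ρ / 4) (by positivity) (hmem ξ hξ)))
      _ = ENNReal.ofReal (2 * δ / (ρ / 4) ^ (d + 1)) * ν (A (k + 1)) := setLIntegral_const _ _
      _ ≤ ENNReal.ofReal (2 * δ / (ρ / 4) ^ (d + 1)) * ENNReal.ofReal (C * ρ ^ ((d : ℝ) - β)) :=
          mul_le_mul_right ((measure_mono hsubball).trans (hC ρ hρ)) _
      _ = ENNReal.ofReal (2 * δ / (ρ / 4) ^ (d + 1) * (C * ρ ^ ((d : ℝ) - β))) :=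
          (ENNReal.ofReal_mul (by positivity)).symm
      _ ≤ ENNReal.ofReal (2 * 4 ^ (d + 1) * C * δ ^ (-β) * (1/2 : ℝ) ^ (k + 1)) :=
          ENNReal.ofReal_le_ofReal key
      _ = ENNReal.ofReal (2 * 4 ^ (d + 1) * C * δ ^ (-β)) * (2⁻¹ : ℝ≥0∞) ^ (k + 1) := by
          rw [ENNReal.ofReal_mul (by positivity), ENNReal.ofReal_pow (by norm_num)]
          congr 2
          rw [one_div, ENNReal.ofReal_inv_of_pos (by norm_num), ENNReal.ofReal_ofNat]
  -- sum up
  have hbk : ∀ k : ℕ, ∫⁻ ξ in A k, ENNReal.ofReal (poissonKernelBall d (r • (y : E)) ξ) ∂ν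
      ≤ ENNReal.ofReal (4 ^ (d + 2) * C * δ ^ (-β)) * (2⁻¹ : ℝ≥0∞) ^ k := by
    intro k
    cases k with
    | zero =>
      rw [pow_zero, mul_one]
      refine hterm0.trans (ENNReal.ofReal_le_ofReal ?_)
      have h2 : (2:ℝ) ≤ 4 ^ (d + 2) := by
        calc (2:ℝ) ≤ 4 ^ 1 := by norm_num
          _ ≤ 4 ^ (d + 2) := pow_le_pow_right₀ (by norm_num) (by omega)
      calc 2 * C * δ ^ (-β) = 2 * (C * δ ^ (-β)) := by ring
        _ ≤ 4 ^ (d + 2) * (C * δ ^ (-β)) :=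
            mul_le_mul_of_nonneg_right h2 (by positivity)
        _ = 4 ^ (d + 2) * C * δ ^ (-β) := by ring
    | succ k =>
      refine (htermS k).trans ?_
      refine mul_le_mul_left (ENNReal.ofReal_le_ofReal ?_) _
      have h2 : (2:ℝ) * 4 ^ (d + 1) ≤ 4 ^ (d + 2) := by
        have e : (4:ℝ) ^ (d + 2) = 4 * 4 ^ (d + 1) := by rw [pow_succ]; ring
        nlinarith [pow_pos (by norm_num : (0:ℝ) < 4) (d + 1)]
      calc 2 * 4 ^ (d + 1) * C * δ ^ (-β) = (2 * 4 ^ (d + 1)) * (C * δ ^ (-β)) := by ring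
        _ ≤ 4 ^ (d + 2) * (C * δ ^ (-β)) :=
            mul_le_mul_of_nonneg_right h2 (by positivity)
        _ = 4 ^ (d + 2) * C * δ ^ (-β) := by ring
  refine hsplit.trans ?_
  calc ∑' k, ∫⁻ ξ in A k, ENNReal.ofReal (poissonKernelBall d (r • (y : E)) ξ) ∂ν
      ≤ ∑' k : ℕ, ENNReal.ofReal (4 ^ (d + 2) * C * δ ^ (-β)) * (2⁻¹ : ℝ≥0∞) ^ k :=
        ENNReal.tsum_le_tsum hbk
    _ = ENNReal.ofReal (4 ^ (d + 2) * C * δ ^ (-β)) * ∑' k : ℕ, (2⁻¹ : ℝ≥0∞) ^ k :=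
        ENNReal.tsum_mul_left
    _ = ENNReal.ofReal (4 ^ (d + 2) * C * δ ^ (-β)) * ENNReal.ofReal 2 := by
        rw [ENNReal.tsum_geometric, ENNReal.one_sub_inv_two, inv_inv, ENNReal.ofReal_ofNat]
    _ = ENNReal.ofReal (4 ^ (d + 2) * C * δ ^ (-β) * 2) :=
        (ENNReal.ofReal_mul (by positivity)).symm
    _ ≤ ENNReal.ofReal (C * 2 ^ (2 * d + 6) * (1 - r) ^ (-β)) := by
        refine ENNReal.ofReal_le_ofReal ?_
        have h4 : (4:ℝ) ^ (d + 2) = 2 ^ (2 * d + 4) := by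
          rw [show (4:ℝ) = 2 ^ 2 by norm_num, ← pow_mul, show 2 * (d + 2) = 2 * d + 4 by ring]
        have h5 : (2:ℝ) * 2 ^ (2 * d + 4) = 2 ^ (2 * d + 5) := by rw [pow_succ]; ring
        have h6 : (2:ℝ) ^ (2 * d + 5) ≤ 2 ^ (2 * d + 6) := pow_le_pow_right₀ (by norm_num) (by omega)
        calc 4 ^ (d + 2) * C * δ ^ (-β) * 2 = (2 * 2 ^ (2 * d + 4)) * (C * δ ^ (-β)) := by
              rw [h4]; ring
          _ = 2 ^ (2 * d + 5) * (C * δ ^ (-β)) := by rw [h5]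
          _ ≤ 2 ^ (2 * d + 6) * (C * δ ^ (-β)) := mul_le_mul_of_nonneg_right h6 (by positivity)
          _ = C * 2 ^ (2 * d + 6) * (1 - r) ^ (-β) := by rw [← hδdef]; ring

set_option maxHeartbeats 1000000 in
theorem dimH_exceptional_le_of_integrable (d : ℕ) (β : ℝ) (hβ : β ∈ Icc (0 : ℝ) d)
    (f : sphere (0 : EuclideanSpace ℝ (Fin (d + 1))) 1 → ℝ)
    (hf : Integrable f (sphereMeasure d)) :
    dimH {y : sphere (0 : EuclideanSpace ℝ (Fin (d + 1))) 1 |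
        ∀ M : ℝ, ∃ᶠ r in nhdsWithin (1 : ℝ) (Iio 1),
          M < |∫ ξ, poissonKernelBall d (r • (y : EuclideanSpace ℝ (Fin (d + 1)))) ξ * f ξ
                  ∂(sphereMeasure d)| * Real.rpow (1 - r) β}
      ≤ ENNReal.ofReal (d - β) := by
  obtain ⟨hβ0, hβd⟩ := hβ
  set E := EuclideanSpace ℝ (Fin (d + 1))
  set μ := sphereMeasure d with hμ
  set ν := μ.withDensity (fun ξ => (‖f ξ‖₊ : ℝ≥0∞)) with hν
  haveI : IsFiniteMeasure ν := by
    constructor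
    rw [hν, withDensity_apply _ MeasurableSet.univ, Measure.restrict_univ]
    exact hf.2
  have hs0 : (0:ℝ) ≤ (d:ℝ) - β := by linarith
  have hsub : {y : sphere (0 : E) 1 |
        ∀ M : ℝ, ∃ᶠ r in nhdsWithin (1 : ℝ) (Iio 1),
          M < |∫ ξ, poissonKernelBall d (r • (y : E)) ξ * f ξ ∂μ| * Real.rpow (1 - r) β}
      ⊆ {y : sphere (0 : E) 1 | ∀ ε : ℝ, 0 < ε → ∃ δ : ℝ, 0 < δ ∧ δ < ε ∧
          ENNReal.ofReal (δ ^ ((d : ℝ) - β)) < ν (closedBall y δ)} := by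
    intro y hy
    simp only [Set.mem_setOf_eq] at hy ⊢
    by_contra hyD
    push_neg at hyD
    obtain ⟨ε, hε, hbd⟩ := hyD
    -- build a uniform Frostman constant
    have hεs : (0:ℝ) < ε ^ ((d : ℝ) - β) := Real.rpow_pos_of_pos hε _
    set C : ℝ := max 1 ((ν Set.univ).toReal / ε ^ ((d : ℝ) - β)) with hCdef
    have hC1 : (1:ℝ) ≤ C := le_max_left _ _
    have hC0 : (0:ℝ) ≤ C := by linarith
    have hC : ∀ δ : ℝ, 0 < δ → ν (closedBall y δ) ≤ ENNReal.ofReal (C * δ ^ ((d : ℝ) - β)) := by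
      intro δ hδ
      have hδs : (0:ℝ) ≤ δ ^ ((d : ℝ) - β) := Real.rpow_nonneg hδ.le _
      rcases lt_or_ge δ ε with h | h
      · refine (hbd δ hδ h).trans (ENNReal.ofReal_le_ofReal ?_)
        nlinarith
      · have h1 : ν (closedBall y δ) ≤ ν Set.univ := measure_mono (Set.subset_univ _)
        have h2 : ν Set.univ = ENNReal.ofReal ((ν Set.univ).toReal) :=
          (ENNReal.ofReal_toReal (measure_ne_top _ _)).symm
        refine h1.trans (h2.le.trans (ENNReal.ofReal_le_ofReal ?_))
        have h4 : ε ^ ((d : ℝ) - β) ≤ δ ^ ((d : ℝ) - β) :=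
          Real.rpow_le_rpow hε.le h hs0
        have h3 : (ν Set.univ).toReal
            = ((ν Set.univ).toReal / ε ^ ((d : ℝ) - β)) * ε ^ ((d : ℝ) - β) := by
          field_simp
        rw [h3]
        calc ((ν Set.univ).toReal / ε ^ ((d : ℝ) - β)) * ε ^ ((d : ℝ) - β)
            ≤ C * ε ^ ((d : ℝ) - β) :=
              mul_le_mul_of_nonneg_right (le_max_right _ _) hεs.le
          _ ≤ C * δ ^ ((d : ℝ) - β) := mul_le_mul_of_nonneg_left h4 hC0
    set M : ℝ := C * 2 ^ (2 * d + 6) with hMdef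
    obtain ⟨r, hMr, hr1, hr2⟩ :=
      ((hy M).and_eventually (Ico_mem_nhdsLT_of_mem
        (show (1:ℝ) ∈ Set.Ioc (1/2) 1 by norm_num))).exists
    have hδpos : (0:ℝ) < 1 - r := by linarith
    have hr0 : (0:ℝ) ≤ r := by linarith
    -- kernel nonnegativity
    have hPnn : ∀ ξ : sphere (0 : E) 1, 0 ≤ poissonKernelBall d (r • (y : E)) ξ := by
      intro ξ
      have h4 : ‖r • (y : E)‖ = r := by
        rw [norm_smul, Real.norm_eq_abs, abs_of_nonneg hr0,
          mem_sphere_zero_iff_norm.mp y.2, mul_one]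
      unfold poissonKernelBall
      apply div_nonneg
      · rw [h4]; nlinarith
      · positivity
    -- measurability of the kernel
    have hmeasP : Measurable
        (fun ξ : sphere (0 : E) 1 => ENNReal.ofReal (poissonKernelBall d (r • (y : E)) (ξ : E))) := by
      refine ENNReal.measurable_ofReal.comp ?_
      have h1 : Measurable (fun x : E => poissonKernelBall d (r • (y : E)) x) := by
        unfold poissonKernelBall
        exact measurable_const.div
          (((measurable_const.sub measurable_id).norm).pow_const _)
      exact h1.comp measurable_subtype_coe
    have hbound := poisson_lintegral_bound d β hβ0 hβd y ν C hC0 hC r hr1 hr2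
    -- chain of inequalities
    have h1 : |∫ ξ, poissonKernelBall d (r • (y : E)) ξ * f ξ ∂μ|
        ≤ (∫⁻ ξ, ENNReal.ofReal ‖poissonKernelBall d (r • (y : E)) ξ * f ξ‖ ∂μ).toReal := by
      rw [← Real.norm_eq_abs]
      exact norm_integral_le_lintegral_norm _
    have h2 : ∫⁻ ξ, ENNReal.ofReal ‖poissonKernelBall d (r • (y : E)) ξ * f ξ‖ ∂μ
        = ∫⁻ ξ, ENNReal.ofReal (poissonKernelBall d (r • (y : E)) ξ) ∂ν := by
      rw [hν, lintegral_withDensity_eq_lintegral_mul₀ (f := fun ξ => (‖f ξ‖₊ : ℝ≥0∞)) hf.1.enorm hmeasP.aemeasurable]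
      refine lintegral_congr fun ξ => ?_
      simp only [Pi.mul_apply]
      rw [Real.norm_eq_abs, abs_mul, abs_of_nonneg (hPnn ξ),
        ENNReal.ofReal_mul (hPnn ξ),
        (by exact Real.enorm_eq_ofReal_abs (f ξ) : (‖f ξ‖₊ : ℝ≥0∞) = ENNReal.ofReal |f ξ|)]
      ring
    have h3 : (∫⁻ ξ, ENNReal.ofReal (poissonKernelBall d (r • (y : E)) ξ) ∂ν).toReal
        ≤ M * (1 - r) ^ (-β) := by
      have hnn : (0:ℝ) ≤ M * (1 - r) ^ (-β) := by positivity
      exact ENNReal.toReal_le_of_le_ofReal hnn hbound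
    have hchain : |∫ ξ, poissonKernelBall d (r • (y : E)) ξ * f ξ ∂μ| ≤ M * (1 - r) ^ (-β) := by
      calc |∫ ξ, poissonKernelBall d (r • (y : E)) ξ * f ξ ∂μ|
          ≤ (∫⁻ ξ, ENNReal.ofReal ‖poissonKernelBall d (r • (y : E)) ξ * f ξ‖ ∂μ).toReal := h1
        _ = (∫⁻ ξ, ENNReal.ofReal (poissonKernelBall d (r • (y : E)) ξ) ∂ν).toReal := by rw [h2]
        _ ≤ M * (1 - r) ^ (-β) := h3
    have hfin : |∫ ξ, poissonKernelBall d (r • (y : E)) ξ * f ξ ∂μ| * Real.rpow (1 - r) β ≤ M := by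
      have := mul_le_mul_of_nonneg_right hchain (Real.rpow_nonneg hδpos.le β)
      rwa [mul_assoc, ← Real.rpow_add hδpos, neg_add_cancel, Real.rpow_zero, mul_one] at this
    exact absurd hMr (not_lt.mpr hfin)
  refine le_trans (dimH_mono hsub) ?_
  have := dimH_density_le ν ((d : ℝ) - β) hs0 _ (fun y hy => hy)
  exact this
end
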